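/- arXiv:1510.07882 — 4 statements merged into one kernel-verified Lean document; each statement's English description precedes it below -/
import Mathlib

section
/- Let n ≥ 6 and let f : {2,...,⌊n/2⌋} → ℝ≥0 be strictly increasing (extended to arguments via min(l, n-l)). Then for all m ∈ {2,...,n-2} and p ∈ {1,...,n-3-m}, the inequality ∑_{l=2}^{m} f(min(l, n-l)) < ∑_{l=2+p}^{m+p} f(min(l, n-l)) holds. -/
/-- Lemma 1 (turmsum): for `n ≥ 6` and `f` strictly increasing on `{2,…,⌊n/2⌋}`
(applied via `min(l, n-l)`), shifting the summation window strictly increases the sum. -/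
theorem stmt_0 (n : ℕ) (hn : 6 ≤ n) (f : ℕ → ℝ)
    (hf0 : ∀ k, 2 ≤ k → k ≤ n / 2 → 0 ≤ f k)
    (hf : ∀ a b, 2 ≤ a → a < b → b ≤ n / 2 → f a < f b) :
    ∀ m, 2 ≤ m → m ≤ n - 2 → ∀ p, 1 ≤ p → p ≤ n - 3 - m →
      ∑ l ∈ Finset.Icc 2 m, f (min l (n - l)) <
        ∑ l ∈ Finset.Icc (2 + p) (m + p), f (min l (n - l)) := by
  set g : ℕ → ℝ := fun l => f (min l (n - l)) with hg
  -- pointwise comparison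
  have gmono : ∀ a b : ℕ, 2 ≤ a → a ≤ n - 2 → 2 ≤ b → b ≤ n - 2 →
      min a (n - a) < min b (n - b) → g a < g b := by
    intro a b ha ha' hb hb' hlt
    exact hf _ _ (by omega) hlt (by omega)
  -- reflection symmetry of the window sum
  have refl : ∀ a b : ℕ, 2 ≤ a → a ≤ b → b ≤ n →
      ∑ l ∈ Finset.Icc a b, g l = ∑ l ∈ Finset.Icc (n - b) (n - a), g l := by
    intro a b ha hab hbn
    refine Finset.sum_nbij' (fun l => n - l) (fun l => n - l) ?_ ?_ ?_ ?_ ?_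
    · intro l hl
      simp only [Finset.mem_Icc] at hl ⊢
      omega
    · intro l hl
      simp only [Finset.mem_Icc] at hl ⊢
      omega
    · intro l hl
      simp only [Finset.mem_Icc] at hl
      show n - (n - l) = l
      omega
    · intro l hl
      simp only [Finset.mem_Icc] at hl
      show n - (n - l) = l
      omega
    · intro l hl
      simp only [Finset.mem_Icc] at hl
      simp only [hg]
      have h1 : n - (n - l) = l := by omega
      rw [h1, min_comm]
  -- peel off the bottom element
  have split : ∀ a b : ℕ, a ≤ b →
      ∑ l ∈ Finset.Icc a b, g l = g a + ∑ l ∈ Finset.Icc (a + 1) b, g l := by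
    intro a b hab
    rw [Finset.Icc_add_one_left_eq_Ioc, ← Finset.sum_insert (by simp), Finset.Ioc_insert_left hab]
  intro m hm2 hmn p hp1 hpn
  have hmp : m + p + 3 ≤ n := by omega
  -- key sliding lemma
  have key : ∀ s : ℕ, 3 ≤ s → 2 * s + m ≤ n + 2 →
      ∑ l ∈ Finset.Icc 2 m, g l < ∑ l ∈ Finset.Icc s (s + (m - 2)), g l := by
    intro s hs
    induction s, hs using Nat.le_induction with
    | base =>
      intro hcond
      have e : 3 + (m - 2) = m + 1 := by omega
      rw [e]
      have h1 : ∑ l ∈ Finset.Icc 2 (m + 1), g l = ∑ l ∈ Finset.Icc 2 m, g l + g (m + 1) :=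
        Finset.sum_Icc_succ_top (by omega) g
      have h2 : ∑ l ∈ Finset.Icc 2 (m + 1), g l = g 2 + ∑ l ∈ Finset.Icc 3 (m + 1), g l :=
        split 2 (m + 1) (by omega)
      have h3 : g 2 < g (m + 1) := gmono 2 (m + 1) (by omega) (by omega) (by omega) (by omega)
        (by omega)
      linarith
    | succ s hs ih =>
      intro hcond
      have ih' := ih (by omega)
      have e : (s + 1) + (m - 2) = s + (m - 2) + 1 := by omega
      rw [e]
      have h1 : ∑ l ∈ Finset.Icc s (s + (m - 2) + 1), g l
          = ∑ l ∈ Finset.Icc s (s + (m - 2)), g l + g (s + (m - 2) + 1) :=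
        Finset.sum_Icc_succ_top (by omega) g
      have h2 : ∑ l ∈ Finset.Icc s (s + (m - 2) + 1), g l
          = g s + ∑ l ∈ Finset.Icc (s + 1) (s + (m - 2) + 1), g l :=
        split s (s + (m - 2) + 1) (by omega)
      have h3 : g s < g (s + (m - 2) + 1) :=
        gmono s (s + (m - 2) + 1) (by omega) (by omega) (by omega) (by omega) (by omega)
      linarith
  rcases le_or_gt (2 + p) (n - (m + p)) with hc | hc
  · have h := key (2 + p) (by omega) (by omega)
    have e : (2 + p) + (m - 2) = m + p := by omega
    rwa [e] at h
  · rw [refl (2 + p) (m + p) (by omega) (by omega) (by omega)]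
    have h := key (n - (m + p)) (by omega) (by omega)
    have e : (n - (m + p)) + (m - 2) = n - (2 + p) := by omega
    rwa [e] at h
end

section
/- For a caterpillar tree τ_c on n ≥ 4 leaves, the increasing split size sequence is given by s(τ_c)_i = ⌊(i+3)/2⌋ for i = 1,...,n-3; equivalently, m(τ_c)_j = min(2j-2, n-3) for j = 2,...,⌊n/2⌋, where m(τ)_j = |{σ ∈ Σ*(τ) : ‖σ‖ ≤ j}|. -/
open SimpleGraph

/-- An (unrooted) phylogenetic tree on `n` leaves with vertex type `V`:
a tree whose degree-one vertices are exactly the images of the `n` leaf labels. -/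
structure PhyloTree (n : ℕ) (V : Type) [Fintype V] where
  G : SimpleGraph V
  isTree : G.IsTree
  leaf : Fin n → V
  leaf_inj : Function.Injective leaf
  leaf_iff : ∀ v : V, (G.neighborSet v).ncard = 1 ↔ ∃ i, leaf i = v

variable {n : ℕ} {V : Type} [Fintype V]

/-- Number of leaves on the `u`-side after deleting the edge `{u,v}`. -/
noncomputable def splitSide (G : SimpleGraph V) (leaf : Fin n → V) (u v : V) : ℕ :=
  {i : Fin n | (G.deleteEdges {s(u, v)}).Reachable (leaf i) u}.ncard

/-- The size `‖σ‖ = min(|A|,|B|)` of the split induced by an edge. -/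
noncomputable def splitSizeE (T : PhyloTree n V) : Sym2 V → ℕ :=
  Sym2.lift ⟨fun u v => min (splitSide T.G T.leaf u v) (splitSide T.G T.leaf v u),
    fun _ _ => min_comm _ _⟩

/-- `Φ_f(τ) = ∑_{σ ∈ Σ*(τ)} f(‖σ‖)`, the sum over non-trivial splits (inner edges). -/
noncomputable def Phi (T : PhyloTree n V) (f : ℕ → ℝ) : ℝ :=
  ∑ᶠ e ∈ {e : Sym2 V | e ∈ T.G.edgeSet ∧ 2 ≤ splitSizeE T e}, f (splitSizeE T e)

/-- `m(τ)_j = |{σ ∈ Σ*(τ) : ‖σ‖ ≤ j}|`. -/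
noncomputable def mseq (T : PhyloTree n V) (j : ℕ) : ℕ :=
  {e : Sym2 V | e ∈ T.G.edgeSet ∧ 2 ≤ splitSizeE T e ∧ splitSizeE T e ≤ j}.ncard

/-- The split size sequence `s(τ)_i = min{j : m(τ)_j ≥ i}` (the left inverse of `m(τ)`). -/
noncomputable def sseq (T : PhyloTree n V) (i : ℕ) : ℕ :=
  sInf {j | i ≤ mseq T j}

def IsLeaf (T : PhyloTree n V) (v : V) : Prop := (T.G.neighborSet v).ncard = 1

/-- A binary (fully resolved) tree: every vertex has degree 1 or 3. -/
def IsBinary (T : PhyloTree n V) : Prop :=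
  ∀ v : V, (T.G.neighborSet v).ncard = 1 ∨ (T.G.neighborSet v).ncard = 3

/-- A caterpillar: a binary tree in which every inner vertex is adjacent to a leaf
(equivalently, the inner vertices form a path / there are exactly two cherries). -/
def IsCaterpillar (T : PhyloTree n V) : Prop :=
  IsBinary T ∧ ∀ v : V, ¬ IsLeaf T v → ∃ w : V, T.G.Adj v w ∧ IsLeaf T w

/-- A single NNI move across the inner edge `{u,v}`: the subtrees hanging at `a`
(on the `u` side) and at `b` (on the `v` side) are swapped. -/
def NNIMove (T T' : PhyloTree n V) : Prop :=
  ∃ u v a b : V, T.G.Adj u v ∧ ¬ IsLeaf T u ∧ ¬ IsLeaf T v ∧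
    T.G.Adj u a ∧ T.G.Adj v b ∧ a ≠ v ∧ b ≠ u ∧
    T'.leaf = T.leaf ∧
    T'.G.edgeSet = (T.G.edgeSet \ {s(u, a), s(v, b)}) ∪ {s(u, b), s(v, a)}

/-- The number of cherries = number of non-trivial splits of size exactly 2. -/
noncomputable def numCherries (T : PhyloTree n V) : ℕ :=
  {e : Sym2 V | e ∈ T.G.edgeSet ∧ splitSizeE T e = 2}.ncard


namespace PhyloAux

variable {V : Type}

/-- The side of `u` across edge `{u,v}`. -/
def side (G : SimpleGraph V) (u v : V) : Set V :=
  {y | (G.deleteEdges {s(u, v)}).Reachable y u}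

variable {G : SimpleGraph V}

lemma mem_side_self (u v : V) : u ∈ side G u v := Reachable.refl u

lemma bridge (ht : G.IsTree) {u v : V} (h : G.Adj u v) : G.IsBridge s(u, v) :=
  (isAcyclic_iff_forall_adj_isBridge.mp ht.2) h

lemma not_reach (ht : G.IsTree) {u v : V} (h : G.Adj u v) :
    ¬ (G.deleteEdges {s(u, v)}).Reachable u v :=
  isBridge_iff.mp (bridge ht h)

lemma not_mem_side (ht : G.IsTree) {u v : V} (h : G.Adj u v) : v ∉ side G u v := by
  intro hv
  exact not_reach ht h hv.symm


lemma side_cover_aux {u v : V} : ∀ {y : V}, G.Walk y u → y ∈ side G u v ∨ y ∈ side G v u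
  | _, SimpleGraph.Walk.nil => Or.inl (Reachable.refl _)
  | y, SimpleGraph.Walk.cons (v := z) hyz q => by
    have ih := side_cover_aux (u := u) (v := v) q
    by_cases he : s(y, z) = s(u, v)
    · rw [Sym2.eq_iff] at he
      rcases he with ⟨rfl, rfl⟩ | ⟨rfl, rfl⟩
      · exact Or.inl (Reachable.refl _)
      · exact Or.inr (Reachable.refl _)
    · rcases ih with ih | ih
      · exact Or.inl (Reachable.trans (Adj.reachable (by simp [hyz, he])) ih)
      · refine Or.inr (Reachable.trans (Adj.reachable ?_) ih)
        simp only [deleteEdges_adj, Set.mem_singleton_iff]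
        refine ⟨hyz, ?_⟩
        rw [Sym2.eq_iff] at he ⊢
        tauto

lemma side_cover (ht : G.IsTree) (u v : V) (y : V) :
    y ∈ side G u v ∨ y ∈ side G v u := by
  obtain ⟨p⟩ := (ht.1.preconnected y u)
  exact side_cover_aux p

lemma side_disjoint (ht : G.IsTree) {u v : V} (h : G.Adj u v) {y : V}
    (h1 : y ∈ side G u v) (h2 : y ∈ side G v u) : False := by
  have h2' : (G.deleteEdges {s(v, u)}).Reachable y v := h2
  rw [Sym2.eq_swap (a := v)] at h2'
  exact not_reach ht h (h1.symm.trans h2')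


lemma sym2_ne {u v w : V} (huv : u ≠ v) (huw : u ≠ w) : s(u, v) ≠ s(v, w) := by
  intro h
  rw [Sym2.eq_iff] at h
  rcases h with ⟨h1, _⟩ | ⟨h1, _⟩
  · exact huv h1
  · exact huw h1

lemma side_mono (ht : G.IsTree) {u v w : V} (huv : G.Adj u v) (hvw : G.Adj v w)
    (huw : u ≠ w) : side G u v ⊆ side G v w := by
  classical
  intro y hy
  obtain ⟨p⟩ := hy
  -- p : walk y → u in G − uv.  It avoids edge (v,w).
  have hvw' : s(v, w) ∉ p.edges := by
    intro hmem
    have hv : v ∈ p.support := p.fst_mem_support_of_mem_edges hmem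
    exact not_reach ht huv ⟨(p.dropUntil v hv).reverse⟩
  have hsub : ∀ e ∈ p.edges, e ∈ (G.deleteEdges {s(v, w)}).edgeSet := by
    intro e he
    have h1 : e ∈ (G.deleteEdges {s(u, v)}).edgeSet := p.edges_subset_edgeSet he
    rw [edgeSet_deleteEdges] at h1
    rw [edgeSet_deleteEdges]
    exact ⟨h1.1, by rintro rfl; exact hvw' he⟩
  have huvne : s(u, v) ≠ s(v, w) := sym2_ne huv.ne huw
  have hadj : (G.deleteEdges {s(v, w)}).Adj u v := by simp [huv, huvne]
  exact Reachable.trans ⟨p.transfer _ hsub⟩ hadj.reachable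

lemma leaf_side (ht : G.IsTree) {x v : V} (hx : G.neighborSet x = {v}) :
    side G x v = {x} := by
  apply Set.eq_singleton_iff_unique_mem.mpr
  refine ⟨mem_side_self x v, ?_⟩
  intro y hy
  obtain ⟨p⟩ := hy
  cases hp : p.reverse with
  | nil =>
    rfl
  | @cons _ z _ hxz q =>
    exfalso
    have hadj : (G.deleteEdges {s(x, v)}).Adj x z := hxz
    rw [deleteEdges_adj] at hadj
    have hz : z ∈ G.neighborSet x := hadj.1
    rw [hx, Set.mem_singleton_iff] at hz
    exact hadj.2 (hz ▸ rfl)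

lemma side_decomp3 (ht : G.IsTree) {v w a b : V} (hvw : G.Adj v w)
    (hN : G.neighborSet v = {a, b, w}) (haw : a ≠ w) (hbw : b ≠ w) :
    side G v w = {v} ∪ side G a v ∪ side G b v := by
  classical
  have hva : G.Adj v a := by rw [← SimpleGraph.mem_neighborSet, hN]; simp
  have hvb : G.Adj v b := by rw [← SimpleGraph.mem_neighborSet, hN]; simp
  apply Set.Subset.antisymm
  · intro y hy
    obtain ⟨p0⟩ := hy
    have hp := (p0.toPath).2
    set p : (G.deleteEdges {s(v, w)}).Walk y v := (p0.toPath).1 with hpdef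
    clear_value p
    -- analyze from the v end
    have key : ∀ (q : (G.deleteEdges {s(v, w)}).Walk v y), q.IsPath →
        y = v ∨ ∃ z, G.Adj v z ∧ z ≠ w ∧ y ∈ side G z v := by
      intro q hq
      cases q with
      | nil => exact Or.inl rfl
      | @cons _ z _ hvz q' =>
        right
        have hadj : (G.deleteEdges {s(v, w)}).Adj v z := hvz
        rw [deleteEdges_adj] at hadj
        have hzw : z ≠ w := by
          rintro rfl
          exact hadj.2 rfl
        refine ⟨z, hadj.1, hzw, ?_⟩
        -- q' : walk z → y avoiding vertex v; transfer its reverse to G − zv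
        rw [SimpleGraph.Walk.cons_isPath_iff] at hq
        have hv_not : v ∉ q'.support := hq.2
        have hedges : ∀ e ∈ q'.reverse.edges, e ∈ (G.deleteEdges {s(z, v)}).edgeSet := by
          intro e he
          rw [SimpleGraph.Walk.edges_reverse, List.mem_reverse] at he
          have h1 : e ∈ (G.deleteEdges {s(v, w)}).edgeSet := q'.edges_subset_edgeSet he
          rw [edgeSet_deleteEdges] at h1
          rw [edgeSet_deleteEdges]
          refine ⟨h1.1, ?_⟩
          rintro rfl
          exact hv_not (q'.snd_mem_support_of_mem_edges he)
        exact ⟨q'.reverse.transfer _ hedges⟩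
    rcases key p.reverse hp.reverse with rfl | ⟨z, hvz, hzw, hy⟩
    · exact Or.inl (Or.inl rfl)
    · have hzN : z ∈ G.neighborSet v := hvz
      rw [hN] at hzN
      rcases hzN with rfl | rfl | rfl
      · exact Or.inl (Or.inr hy)
      · exact Or.inr hy
      · exact absurd rfl hzw
  · rintro y ((rfl | hy) | hy)
    · exact mem_side_self _ _
    · exact side_mono ht hva.symm hvw haw hy
    · exact side_mono ht hvb.symm hvw hbw hy


section TreeLemmas

variable {n : ℕ} [Fintype V] (T : PhyloTree n V)

/-- `v` is a leaf vertex. -/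
def Lf (v : V) : Prop := ∃ i, T.leaf i = v

lemma lf_iff {v : V} : Lf T v ↔ (T.G.neighborSet v).ncard = 1 :=
  ⟨fun h => (T.leaf_iff v).mpr h, fun h => (T.leaf_iff v).mp h⟩

lemma inn_of_not_lf (hb : IsBinary T) {v : V} (h : ¬ Lf T v) :
    (T.G.neighborSet v).ncard = 3 := by
  rcases hb v with h1 | h3
  · exact absurd ((lf_iff T).mpr h1) h
  · exact h3

lemma not_lf_of_inn {v : V} (h : (T.G.neighborSet v).ncard = 3) : ¬ Lf T v := by
  intro hl
  rw [lf_iff T] at hl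
  omega

lemma splitSide_eq (u v : V) :
    splitSide T.G T.leaf u v = {i : Fin n | T.leaf i ∈ side T.G u v}.ncard := rfl

lemma splitSide_add (huv : T.G.Adj u v) :
    splitSide T.G T.leaf u v + splitSide T.G T.leaf v u = n := by
  rw [splitSide_eq, splitSide_eq]
  have hcomp : {i : Fin n | T.leaf i ∈ side T.G v u} =
      {i : Fin n | T.leaf i ∈ side T.G u v}ᶜ := by
    ext i
    simp only [Set.mem_setOf_eq, Set.mem_compl_iff]
    constructor
    · intro h2 h1
      exact side_disjoint T.isTree huv h1 h2
    · intro h1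
      rcases side_cover T.isTree u v (T.leaf i) with h | h
      · exact absurd h h1
      · exact h
  rw [hcomp, Set.ncard_add_ncard_compl]
  simp

lemma leaf_nbr {x : V} (hx : Lf T x) {v : V} (hadj : T.G.Adj x v) :
    T.G.neighborSet x = {v} := by
  have h1 := (lf_iff T).mp hx
  obtain ⟨a, ha⟩ := Set.ncard_eq_one.mp h1
  have : v ∈ T.G.neighborSet x := hadj
  rw [ha, Set.mem_singleton_iff] at this
  rw [ha, this]

lemma leaf_splitSide {x v : V} (hx : Lf T x) (hadj : T.G.Adj x v) :
    splitSide T.G T.leaf x v = 1 := by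
  rw [splitSide_eq, leaf_side T.isTree (leaf_nbr T hx hadj)]
  obtain ⟨i0, hi0⟩ := hx
  have : {i : Fin n | T.leaf i ∈ ({x} : Set V)} = {i0} := by
    ext i
    simp only [Set.mem_setOf_eq, Set.mem_singleton_iff]
    constructor
    · intro h; exact T.leaf_inj (h.trans hi0.symm)
    · rintro rfl; exact hi0
  rw [this, Set.ncard_singleton]

/-- extract the other two neighbours of a degree-3 vertex -/
lemma nbr3 {u v : V} (h3 : (T.G.neighborSet u).ncard = 3) (hv : T.G.Adj u v) :
    ∃ a b, a ≠ b ∧ a ≠ v ∧ b ≠ v ∧ T.G.neighborSet u = {a, b, v} := by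
  obtain ⟨x, y, z, hxy, hxz, hyz, hs⟩ := Set.ncard_eq_three.mp h3
  have hvm : v ∈ ({x, y, z} : Set V) := hs ▸ hv
  rcases hvm with rfl | rfl | rfl
  · exact ⟨y, z, hyz, fun h => hxy h.symm, fun h => hxz h.symm, by rw [hs]; ext t; simp; tauto⟩
  · exact ⟨x, z, hxz, hxy, fun h => hyz h.symm, by rw [hs]; ext t; simp; tauto⟩
  · exact ⟨x, y, hxy, hxz, hyz, by rw [hs]⟩

lemma side_has_leaf (hb : IsBinary T) :
    ∀ {u v : V}, T.G.Adj u v → ∃ i, T.leaf i ∈ side T.G u v := by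
  have main : ∀ (m : ℕ), ∀ u v : V, T.G.Adj u v → (side T.G u v).ncard = m →
      ∃ i, T.leaf i ∈ side T.G u v := by
    intro m
    induction m using Nat.strong_induction_on with
    | _ m ih =>
      intro u v huv hm
      by_cases hu : Lf T u
      · obtain ⟨i, hi⟩ := hu
        exact ⟨i, by rw [hi]; exact mem_side_self u v⟩
      · have h3 := inn_of_not_lf T hb hu
        obtain ⟨a, b, hab, hav, hbv, hN⟩ := nbr3 T h3 huv
        have hua : T.G.Adj u a := by
          rw [← SimpleGraph.mem_neighborSet, hN]; simp
        have hss : side T.G a u ⊂ side T.G u v := by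
          constructor
          · exact side_mono T.isTree hua.symm huv hav
          · intro hsub
            exact side_disjoint T.isTree hua (mem_side_self u a)
              (hsub (mem_side_self u v))
        have hlt : (side T.G a u).ncard < m :=
          hm ▸ Set.ncard_lt_ncard hss (Set.toFinite _)
        obtain ⟨i, hi⟩ := ih _ hlt a u hua.symm rfl
        exact ⟨i, side_mono T.isTree hua.symm huv hav hi⟩
  intro u v huv
  exact main _ u v huv rfl

lemma splitSide_pos (hb : IsBinary T) {u v : V} (huv : T.G.Adj u v) :
    1 ≤ splitSide T.G T.leaf u v := by
  rw [splitSide_eq]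
  obtain ⟨i, hi⟩ := side_has_leaf T hb huv
  have : 0 < {i : Fin n | T.leaf i ∈ side T.G u v}.ncard := by
    rw [Set.ncard_pos (Set.toFinite _)]
    exact ⟨i, hi⟩
  omega

lemma adj_of_mem_nbr {u z : V} {s : Set V} (hN : T.G.neighborSet u = s) (hz : z ∈ s) :
    T.G.Adj u z := by
  rw [← SimpleGraph.mem_neighborSet, hN]; exact hz

lemma inner_splitSide_two (hb : IsBinary T) {u v : V}
    (h3 : (T.G.neighborSet u).ncard = 3) (huv : T.G.Adj u v) :
    2 ≤ splitSide T.G T.leaf u v := by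
  obtain ⟨a, b, hab, hav, hbv, hN⟩ := nbr3 T h3 huv
  have hua : T.G.Adj u a := adj_of_mem_nbr T hN (by simp)
  have hub : T.G.Adj u b := adj_of_mem_nbr T hN (by simp)
  obtain ⟨i, hi⟩ := side_has_leaf T hb hua.symm
  obtain ⟨j, hj⟩ := side_has_leaf T hb hub.symm
  have hij : i ≠ j := by
    rintro rfl
    have h1 : T.leaf i ∈ side T.G u b :=
      side_mono T.isTree hua.symm hub hab hi
    exact side_disjoint T.isTree hub h1 hj
  have hdec := side_decomp3 T.isTree huv hN hav hbv
  have hsub : ({i, j} : Set (Fin n)) ⊆ {i : Fin n | T.leaf i ∈ side T.G u v} := by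
    rintro t (rfl | rfl)
    · rw [Set.mem_setOf_eq, hdec]; exact Or.inl (Or.inr hi)
    · rw [Set.mem_setOf_eq, hdec]; exact Or.inr hj
  calc 2 = ({i, j} : Set (Fin n)).ncard := (Set.ncard_pair hij).symm
    _ ≤ _ := Set.ncard_le_ncard hsub (Set.toFinite _)

lemma cherry_splitSide {u v a b : V} (huv : T.G.Adj u v) (hu : ¬ Lf T u)
    (hN : T.G.neighborSet u = {a, b, v}) (ha : Lf T a) (hb : Lf T b)
    (hab : a ≠ b) (hav : a ≠ v) (hbv : b ≠ v) :
    splitSide T.G T.leaf u v = 2 := by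
  have hua : T.G.Adj u a := adj_of_mem_nbr T hN (by simp)
  have hub : T.G.Adj u b := adj_of_mem_nbr T hN (by simp)
  have hdec := side_decomp3 T.isTree huv hN hav hbv
  rw [leaf_side T.isTree (leaf_nbr T ha hua.symm),
      leaf_side T.isTree (leaf_nbr T hb hub.symm)] at hdec
  obtain ⟨ia, hia⟩ := ha
  obtain ⟨ib, hib⟩ := hb
  rw [splitSide_eq]
  have : {i : Fin n | T.leaf i ∈ side T.G u v} = {ia, ib} := by
    ext t
    rw [Set.mem_setOf_eq, hdec]
    simp only [Set.union_singleton, Set.mem_insert_iff, Set.mem_singleton_iff]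
    constructor
    · rintro (h | h | h)
      · exact Or.inr (T.leaf_inj (h.trans hib.symm))
      · exact Or.inl (T.leaf_inj (h.trans hia.symm))
      · exact absurd ⟨t, h⟩ hu
    · rintro (rfl | rfl)
      · rw [hia]; exact Or.inr (Or.inl rfl)
      · rw [hib]; exact Or.inl rfl
  rw [this, Set.ncard_pair (fun h => hab (by rw [← hia, ← hib, h]))]

/-- the extension step: moving one step along the spine increases the split side by 1 -/
lemma step_splitSide {u v w x : V} (huv : T.G.Adj u v) (hvw : T.G.Adj v w)
    (hv : ¬ Lf T v) (hN : T.G.neighborSet v = {u, x, w}) (hx : Lf T x)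
    (hux : u ≠ x) (huw : u ≠ w) (hxw : x ≠ w) :
    splitSide T.G T.leaf v w = splitSide T.G T.leaf u v + 1 := by
  have hvx : T.G.Adj v x := adj_of_mem_nbr T hN (by simp)
  have hdec := side_decomp3 T.isTree hvw hN huw hxw
  rw [leaf_side T.isTree (leaf_nbr T hx hvx.symm)] at hdec
  obtain ⟨ix, hix⟩ := hx
  rw [splitSide_eq, splitSide_eq]
  have hset : {i : Fin n | T.leaf i ∈ side T.G v w} =
      insert ix {i : Fin n | T.leaf i ∈ side T.G u v} := by
    ext t
    rw [Set.mem_setOf_eq, hdec]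
    simp only [Set.union_singleton, Set.mem_insert_iff, Set.mem_singleton_iff,
      Set.mem_setOf_eq]
    constructor
    · rintro (h | h | h)
      · exact Or.inl (T.leaf_inj (h.trans hix.symm))
      · exact absurd ⟨t, h⟩ hv
      · exact Or.inr h
    · rintro (rfl | h)
      · rw [hix]; exact Or.inl rfl
      · exact Or.inr (Or.inr h)
  rw [hset, Set.ncard_insert_of_notMem ?_ (Set.toFinite _)]
  rw [Set.mem_setOf_eq, hix]
  intro hmem
  have h1 : x ∈ side T.G v x := side_mono T.isTree huv hvx hux hmem
  exact side_disjoint T.isTree hvx h1 (mem_side_self x v)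

/-- leaf index sets of the two subtree sides at a degree-3 vertex are disjoint -/
lemma ls_disjoint {x v y : V} (hxv : T.G.Adj x v) (hvy : T.G.Adj v y) (hxy : x ≠ y) :
    Disjoint {i : Fin n | T.leaf i ∈ side T.G x v} {i : Fin n | T.leaf i ∈ side T.G y v} := by
  rw [Set.disjoint_left]
  intro i h1 h2
  have h3 : T.leaf i ∈ side T.G v y := side_mono T.isTree hxv hvy hxy h1
  exact side_disjoint T.isTree hvy.symm h2 h3

lemma exists_cherry (hn : 4 ≤ n) (hb : IsBinary T) (hcat : IsCaterpillar T) :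
    ∃ u v a b : V, T.G.Adj u v ∧ ¬ Lf T u ∧ ¬ Lf T v ∧ Lf T a ∧ Lf T b ∧
      a ≠ b ∧ a ≠ v ∧ b ≠ v ∧ T.G.neighborSet u = {a, b, v} ∧
      splitSide T.G T.leaf u v = 2 := by
  classical
  -- step 1 : an inner edge exists
  have hx0 : Lf T (T.leaf ⟨0, by omega⟩) := ⟨_, rfl⟩
  set x0 := T.leaf ⟨0, by omega⟩ with hx0def
  obtain ⟨p, hp⟩ := Set.ncard_eq_one.mp ((lf_iff T).mp hx0)
  have hadj0 : T.G.Adj x0 p := adj_of_mem_nbr T hp (by simp)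
  have hpinn : ¬ Lf T p := by
    intro hLp
    have h1 := leaf_splitSide T hx0 hadj0
    have h2 := leaf_splitSide T hLp hadj0.symm
    have h3 := splitSide_add T hadj0
    omega
  have hinner_edge : ∃ u v : V, T.G.Adj u v ∧ ¬ Lf T u ∧ ¬ Lf T v := by
    obtain ⟨a, b, hab, hax, hbx, hN⟩ := nbr3 T (inn_of_not_lf T hb hpinn) hadj0.symm
    by_cases hLa : Lf T a
    · by_cases hLb : Lf T b
      · exfalso
        have h1 := cherry_splitSide T hadj0.symm hpinn hN hLa hLb hab hax hbx
        have h2 := leaf_splitSide T hx0 hadj0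
        have h3 := splitSide_add T hadj0
        omega
      · exact ⟨p, b, adj_of_mem_nbr T hN (by simp), hpinn, hLb⟩
    · exact ⟨p, a, adj_of_mem_nbr T hN (by simp), hpinn, hLa⟩
  -- step 2 : minimize the split side over inner edges
  set M := {m : ℕ | ∃ u v : V, T.G.Adj u v ∧ ¬ Lf T u ∧ ¬ Lf T v ∧
    splitSide T.G T.leaf u v = m} with hM
  have hMne : M.Nonempty := by
    obtain ⟨u, v, h1, h2, h3⟩ := hinner_edge
    exact ⟨_, u, v, h1, h2, h3, rfl⟩
  obtain ⟨u, v, huv, hu, hv, hm⟩ := Nat.sInf_mem hMne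
  obtain ⟨a, b, hab, hav, hbv, hN⟩ := nbr3 T (inn_of_not_lf T hb hu) huv
  have hua : T.G.Adj u a := adj_of_mem_nbr T hN (by simp)
  have hub : T.G.Adj u b := adj_of_mem_nbr T hN (by simp)
  -- if a subtree neighbour is inner, its side is strictly smaller : contradiction
  have key : ∀ c d : V, T.G.Adj u c → T.G.Adj u d → c ≠ d → c ≠ v → d ≠ v → Lf T c := by
    intro c d huc hud hcd hcv hdv
    by_contra hLc
    have hcin : splitSide T.G T.leaf c u ∈ M := ⟨c, u, huc.symm, hLc, hu, rfl⟩
    have hlt : splitSide T.G T.leaf c u < splitSide T.G T.leaf u v := by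
      rw [splitSide_eq, splitSide_eq]
      apply Set.ncard_lt_ncard ?_ (Set.toFinite _)
      constructor
      · intro i hi
        exact side_mono T.isTree huc.symm huv hcv hi
      · intro hsub
        obtain ⟨j, hj⟩ := side_has_leaf T hb hud.symm
        have hj2 : T.leaf j ∈ side T.G u v := side_mono T.isTree hud.symm huv hdv hj
        have hj3 : T.leaf j ∈ side T.G c u := hsub hj2
        exact (Set.disjoint_left.mp (ls_disjoint T hud.symm huc (Ne.symm hcd)))
          hj (by exact hj3)
    rw [hm] at hlt
    exact absurd (Nat.sInf_le hcin) (by omega)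
  have hLa : Lf T a := key a b hua hub hab hav hbv
  have hLb : Lf T b := key b a hub hua (Ne.symm hab) hbv hav
  refine ⟨u, v, a, b, huv, hu, hv, hLa, hLb, hab, hav, hbv, hN, ?_⟩
  exact cherry_splitSide T huv hu hN hLa hLb hab hav hbv

end TreeLemmas

/-- A spine chain of length `k` in a caterpillar. -/
structure Chain {n : ℕ} {V : Type} [Fintype V] (T : PhyloTree n V) (k : ℕ) where
  c : ℕ → V
  adj : ∀ j ≤ k, T.G.Adj (c j) (c (j+1))
  inner : ∀ j ≤ k+1, ¬ Lf T (c j)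
  lfv : ∀ j ≤ k, splitSide T.G T.leaf (c j) (c (j+1)) = j + 2
  cover : ∀ y ∈ side T.G (c k) (c (k+1)), Lf T y ∨ ∃ i ≤ k, y = c i
  revincl : ∀ j m, j ≤ m → m ≤ k →
    side T.G (c (m+1)) (c m) ⊆ side T.G (c (j+1)) (c j)
  nbrs0 : ∃ a b, a ≠ b ∧ a ≠ c 1 ∧ b ≠ c 1 ∧ Lf T a ∧ Lf T b ∧
    T.G.neighborSet (c 0) = {a, b, c 1}
  nbrs : ∀ j, 1 ≤ j → j ≤ k → ∃ x, Lf T x ∧ x ≠ c (j-1) ∧ x ≠ c (j+1) ∧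
    c (j-1) ≠ c (j+1) ∧ T.G.neighborSet (c j) = {c (j-1), x, c (j+1)}

section ChainSec

variable {n : ℕ} [Fintype V] (T : PhyloTree n V)

lemma chain_zero (hn : 4 ≤ n) (hb : IsBinary T) (hcat : IsCaterpillar T) :
    Nonempty (Chain T 0) := by
  obtain ⟨u, v, a, b, huv, hu, hv, hLa, hLb, hab, hav, hbv, hN, h2⟩ :=
    exists_cherry T hn hb hcat
  have hua : T.G.Adj u a := adj_of_mem_nbr T hN (by simp)
  have hub : T.G.Adj u b := adj_of_mem_nbr T hN (by simp)
  refine ⟨⟨fun j => if j = 0 then u else v, ?_, ?_, ?_, ?_, ?_, ?_, ?_⟩⟩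
  · intro j hj
    interval_cases j
    simpa using huv
  · intro j hj
    interval_cases j <;> simpa using (by assumption)
  · intro j hj
    interval_cases j
    simpa using h2
  · intro y hy
    norm_num at hy
    rw [side_decomp3 T.isTree huv hN hav hbv,
      leaf_side T.isTree (leaf_nbr T hLa hua.symm),
      leaf_side T.isTree (leaf_nbr T hLb hub.symm)] at hy
    rcases hy with (rfl | rfl) | rfl
    · exact Or.inr ⟨0, le_rfl, by norm_num⟩
    · exact Or.inl hLa
    · exact Or.inl hLb
  · intro j m hjm hm
    interval_cases m
    interval_cases j
    exact subset_rfl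
  · exact ⟨a, b, hab, by simpa using hav, by simpa using hbv, hLa, hLb, by simp [hN]⟩
  · intro j hj1 hj0
    omega

lemma chain_succ (hn : 4 ≤ n) (hb : IsBinary T) (hcat : IsCaterpillar T) (k : ℕ)
    (hk : k + 1 ≤ n - 4) (C : Chain T k) : Nonempty (Chain T (k+1)) := by
  classical
  set u := C.c k with hudef
  set v := C.c (k+1) with hvdef
  have hadj_uv : T.G.Adj u v := C.adj k le_rfl
  have hu_inn : ¬ Lf T u := C.inner k (by omega)
  have hv_inn : ¬ Lf T v := C.inner (k+1) (by omega)
  have hlf : splitSide T.G T.leaf u v = k + 2 := C.lfv k le_rfl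
  have h3v : (T.G.neighborSet v).ncard = 3 := inn_of_not_lf T hb hv_inn
  obtain ⟨x, y, hxy, hxu, hyu, hNv⟩ := nbr3 T h3v hadj_uv.symm
  -- the caterpillar condition gives a leaf neighbour of v
  obtain ⟨z, hvz, hzleaf⟩ := hcat.2 v (by
    intro hL
    unfold IsLeaf at hL
    omega)
  have hLz : Lf T z := (lf_iff T).mpr hzleaf
  have hzu : z ≠ u := by rintro rfl; exact hu_inn hLz
  have hzmem : z ∈ ({x, y, u} : Set V) := hNv ▸ hvz
  -- pick the leaf neighbour as x', the other as y'
  obtain ⟨x', y', hx'y', hx'u, hy'u, hLx', hNv'⟩ :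
      ∃ x' y', x' ≠ y' ∧ x' ≠ u ∧ y' ≠ u ∧ Lf T x' ∧
        T.G.neighborSet v = {x', y', u} := by
    rcases hzmem with h | h | h
    · exact ⟨x, y, hxy, hxu, hyu, h ▸ hLz, hNv⟩
    · refine ⟨y, x, Ne.symm hxy, hyu, hxu, h ▸ hLz, ?_⟩
      rw [hNv]; ext t; simp; tauto
    · exact absurd h hzu
  have hadx : T.G.Adj v x' := adj_of_mem_nbr T hNv' (by simp)
  have hady : T.G.Adj v y' := adj_of_mem_nbr T hNv' (by simp)
  have hadd := splitSide_add T hadj_uv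
  have hy'inn : ¬ Lf T y' := by
    intro hLy'
    have h2 := cherry_splitSide T hadj_uv.symm hv_inn hNv' hLx' hLy' hx'y' hx'u hy'u
    omega
  have hNv2 : T.G.neighborSet v = {u, x', y'} := by
    rw [hNv']; ext t; simp; tauto
  have hstep : splitSide T.G T.leaf v y' = splitSide T.G T.leaf u v + 1 :=
    step_splitSide T hadj_uv hady hv_inn hNv2 hLx' (Ne.symm hx'u) (Ne.symm hy'u) hx'y'
  have hdec : side T.G v y' = {v} ∪ side T.G u v ∪ side T.G x' v :=
    side_decomp3 T.isTree hady hNv2 (Ne.symm hy'u) hx'y'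
  have hxside : side T.G x' v = {x'} := leaf_side T.isTree (leaf_nbr T hLx' hadx.symm)
  set c' : ℕ → V := Function.update C.c (k+2) y' with hc'def
  have hcc : ∀ j, j ≤ k+1 → c' j = C.c j := by
    intro j hj
    apply Function.update_of_ne (by omega)
  have hcnew : c' (k+2) = y' := Function.update_self _ _ _
  refine ⟨⟨c', ?_, ?_, ?_, ?_, ?_, ?_, ?_⟩⟩
  · intro j hj
    rcases Nat.lt_or_ge j (k+1) with h | h
    · rw [hcc j (by omega), hcc (j+1) (by omega)]
      exact C.adj j (by omega)
    · have : j = k+1 := by omega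
      subst this
      rw [hcc (k+1) le_rfl, hcnew]
      exact hady
  · intro j hj
    rcases Nat.lt_or_ge j (k+2) with h | h
    · rw [hcc j (by omega)]
      exact C.inner j (by omega)
    · have : j = k+2 := by omega
      subst this
      rw [hcnew]
      exact hy'inn
  · intro j hj
    rcases Nat.lt_or_ge j (k+1) with h | h
    · rw [hcc j (by omega), hcc (j+1) (by omega)]
      exact C.lfv j (by omega)
    · have : j = k+1 := by omega
      subst this
      rw [hcc (k+1) le_rfl, hcnew, hstep, hlf]
  · intro y0 hy0
    rw [hcc (k+1) le_rfl, hcnew, hdec, hxside] at hy0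
    rcases hy0 with (rfl | hy0) | rfl
    · exact Or.inr ⟨k+1, le_rfl, (hcc (k+1) le_rfl).symm⟩
    · rcases C.cover y0 hy0 with hL | ⟨i, hi, hieq⟩
      · exact Or.inl hL
      · exact Or.inr ⟨i, by omega, by rw [hcc i (by omega)]; exact hieq⟩
    · exact Or.inl hLx'
  · intro j m hjm hm
    rcases Nat.lt_or_ge m (k+1) with h | h
    · rw [hcc m (by omega), hcc (m+1) (by omega), hcc j (by omega), hcc (j+1) (by omega)]
      exact C.revincl j m hjm (by omega)
    · have : m = k+1 := by omega
      subst this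
      rw [hcc (k+1) le_rfl, hcnew]
      have h1 : side T.G y' v ⊆ side T.G v u :=
        side_mono T.isTree hady.symm hadj_uv.symm hy'u
      rcases Nat.lt_or_ge j (k+1) with h2 | h2
      · rw [hcc j (by omega), hcc (j+1) (by omega)]
        exact h1.trans (C.revincl j k (by omega) le_rfl)
      · have : j = k+1 := by omega
        subst this
        rw [hcc (k+1) le_rfl, hcnew]
  · obtain ⟨a, b, h1, h2, h3, h4, h5, h6⟩ := C.nbrs0
    exact ⟨a, b, h1, by rwa [hcc 1 (by omega)], by rwa [hcc 1 (by omega)], h4, h5,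
      by rw [hcc 0 (by omega), hcc 1 (by omega)]; exact h6⟩
  · intro j hj1 hjk
    rcases Nat.lt_or_ge j (k+1) with h | h
    · obtain ⟨x0, h1, h2, h3, h4, h5⟩ := C.nbrs j hj1 (by omega)
      rw [hcc j (by omega), hcc (j-1) (by omega), hcc (j+1) (by omega)]
      exact ⟨x0, h1, h2, h3, h4, h5⟩
    · have : j = k+1 := by omega
      subst this
      rw [hcc (k+1) le_rfl, hcnew]
      have : k + 1 - 1 = k := by omega
      rw [this, hcc k (by omega)]
      exact ⟨x', hLx', hx'u, hx'y', Ne.symm hy'u, hNv2⟩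

end ChainSec

section Final

variable {n : ℕ} [Fintype V] (T : PhyloTree n V)

lemma splitSizeE_mk (u v : V) :
    splitSizeE T s(u, v) =
      min (splitSide T.G T.leaf u v) (splitSide T.G T.leaf v u) := rfl

lemma chain_exists (hn : 4 ≤ n) (hcat : IsCaterpillar T) (k : ℕ) (hk : k ≤ n - 4) :
    Nonempty (Chain T k) := by
  induction k with
  | zero => exact chain_zero T hn hcat.1 hcat
  | succ m ih =>
    obtain ⟨C⟩ := ih (by omega)
    exact chain_succ T hn hcat.1 hcat m hk C

lemma spine (hn : 4 ≤ n) (hcat : IsCaterpillar T) :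
    ∃ c : ℕ → V,
      (∀ i, i ≤ n-4 → T.G.Adj (c i) (c (i+1))) ∧
      (∀ i, i ≤ n-4 → splitSide T.G T.leaf (c i) (c (i+1)) = i + 2 ∧
        splitSide T.G T.leaf (c (i+1)) (c i) = n - (i+2)) ∧
      (∀ i i', i ≤ n-4 → i' ≤ n-4 → s(c i, c (i+1)) = s(c i', c (i'+1)) → i = i') ∧
      (∀ e, e ∈ T.G.edgeSet ∧ 2 ≤ splitSizeE T e →
        ∃ i, i ≤ n-4 ∧ e = s(c i, c (i+1))) := by
  have hb := hcat.1
  set K := n - 4 with hK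
  obtain ⟨C⟩ := chain_exists T hn hcat K le_rfl
  set c := C.c with hc
  -- split sides along the spine
  have hsides : ∀ i, i ≤ K → splitSide T.G T.leaf (c i) (c (i+1)) = i + 2 ∧
      splitSide T.G T.leaf (c (i+1)) (c i) = n - (i+2) := by
    intro i hi
    have h1 := C.lfv i hi
    have h2 := splitSide_add T (C.adj i hi)
    rw [← hc] at h1 h2
    exact ⟨h1, by omega⟩
  -- distinctness of the spine vertices
  have cdist : ∀ p q, p < q → q ≤ K+1 → c q ≠ c p := by
    intro p q hpq hq heq
    obtain ⟨q', rfl⟩ : ∃ q', q = q'+1 := ⟨q-1, by omega⟩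
    have h1 : c (q'+1) ∈ side T.G (c (q'+1)) (c q') := mem_side_self _ _
    have h2 : c (q'+1) ∈ side T.G (c (p+1)) (c p) :=
      C.revincl p q' (by omega) (by omega) h1
    have h3 : c p ∈ side T.G (c p) (c (p+1)) := mem_side_self _ _
    rw [heq] at h2
    exact side_disjoint T.isTree (C.adj p (by omega)) h3 h2
  -- tail analysis
  have htail2 : splitSide T.G T.leaf (c (K+1)) (c K) = 2 := by
    have := (hsides K le_rfl).2
    omega
  have huvK : T.G.Adj (c K) (c (K+1)) := C.adj K le_rfl
  obtain ⟨x, y, hxy, hxu, hyu, hNtail⟩ :=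
    nbr3 T (inn_of_not_lf T hb (C.inner (K+1) le_rfl)) huvK.symm
  have hvx : T.G.Adj (c (K+1)) x := adj_of_mem_nbr T hNtail (by simp)
  have hvy : T.G.Adj (c (K+1)) y := adj_of_mem_nbr T hNtail (by simp)
  have hLx : Lf T x ∧ Lf T y := by
    have hdec := side_decomp3 T.isTree huvK.symm hNtail hxu hyu
    have hsub : {i : Fin n | T.leaf i ∈ side T.G x (c (K+1))} ∪
        {i : Fin n | T.leaf i ∈ side T.G y (c (K+1))} ⊆
        {i : Fin n | T.leaf i ∈ side T.G (c (K+1)) (c K)} := by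
      rintro t (ht | ht) <;> rw [Set.mem_setOf_eq, hdec]
      · exact Or.inl (Or.inr ht)
      · exact Or.inr ht
    have hdisj := ls_disjoint T hvx.symm hvy hxy
    have hcard : splitSide T.G T.leaf x (c (K+1)) + splitSide T.G T.leaf y (c (K+1)) ≤ 2 := by
      rw [splitSide_eq, splitSide_eq, ← Set.ncard_union_eq hdisj (Set.toFinite _) (Set.toFinite _)]
      calc _ ≤ {i : Fin n | T.leaf i ∈ side T.G (c (K+1)) (c K)}.ncard :=
            Set.ncard_le_ncard hsub (Set.toFinite _)
        _ = 2 := by rw [← splitSide_eq]; exact htail2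
    constructor
    · by_contra hLx
      have h1 := inner_splitSide_two T hb (inn_of_not_lf T hb hLx) hvx.symm
      have h2 := splitSide_pos T hb hvy.symm
      omega
    · by_contra hLy
      have h1 := inner_splitSide_two T hb (inn_of_not_lf T hb hLy) hvy.symm
      have h2 := splitSide_pos T hb hvx.symm
      omega
  -- total cover
  have hcover : ∀ w : V, Lf T w ∨ ∃ i ≤ K+1, w = c i := by
    intro w
    rcases side_cover T.isTree (c K) (c (K+1)) w with hw | hw
    · rcases C.cover w hw with h | ⟨i, hi, rfl⟩
      · exact Or.inl h
      · exact Or.inr ⟨i, by omega, rfl⟩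
    · rw [side_decomp3 T.isTree huvK.symm hNtail hxu hyu,
        leaf_side T.isTree (leaf_nbr T hLx.1 hvx.symm),
        leaf_side T.isTree (leaf_nbr T hLx.2 hvy.symm)] at hw
      rcases hw with (rfl | rfl) | rfl
      · exact Or.inr ⟨K+1, le_rfl, rfl⟩
      · exact Or.inl hLx.1
      · exact Or.inl hLx.2
  -- adjacency on the spine is only between consecutive vertices
  have hconsec : ∀ i m, i < m → m ≤ K+1 → T.G.Adj (c i) (c m) → m = i + 1 := by
    intro i m him hm hadj
    have hinner_m : ¬ Lf T (c m) := C.inner m hm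
    rcases Nat.eq_zero_or_pos i with rfl | hi
    · obtain ⟨a, b, hab, ha1, hb1, hLa, hLb, hN0⟩ := C.nbrs0
      have : c m ∈ ({a, b, c 1} : Set V) := hN0 ▸ hadj
      rcases this with h | h | h
      · exact absurd (h ▸ hLa) hinner_m
      · exact absurd (h ▸ hLb) hinner_m
      · rcases Nat.lt_trichotomy m 1 with h1 | h1 | h1
        · omega
        · omega
        · exact absurd h (cdist 1 m h1 hm)
    · have hiK : i ≤ K := by omega
      obtain ⟨x0, hLx0, _, _, _, hNi⟩ := C.nbrs i hi hiK
      have : c m ∈ ({c (i-1), x0, c (i+1)} : Set V) := hNi ▸ hadj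
      rcases this with h | h | h
      · exact absurd h (cdist (i-1) m (by omega) hm)
      · exact absurd (h ▸ hLx0) hinner_m
      · rcases Nat.lt_trichotomy m (i+1) with h1 | h1 | h1
        · omega
        · omega
        · exact absurd h (cdist (i+1) m h1 hm)
  refine ⟨c, fun i hi => C.adj i hi, hsides, ?_, ?_⟩
  · intro i i' hi hi' heq
    rw [Sym2.eq_iff] at heq
    rcases heq with ⟨h1, h2⟩ | ⟨h1, h2⟩
    · by_contra hne
      rcases Nat.lt_or_ge i i' with h | h
      · exact cdist i i' h (by omega) h1.symm
      · exact cdist i' i (by omega) (by omega) h1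
    · -- c i = c (i'+1) and c (i+1) = c i'
      have e1 : i = i' + 1 := by
        rcases Nat.lt_trichotomy i (i'+1) with h | h | h
        · exact absurd h1.symm (cdist i (i'+1) h (by omega))
        · exact h
        · exact absurd h1 (cdist (i'+1) i h (by omega))
      have e2 : i + 1 = i' := by
        rcases Nat.lt_trichotomy (i+1) i' with h | h | h
        · exact absurd h2.symm (cdist (i+1) i' h (by omega))
        · exact h
        · exact absurd h2 (cdist i' (i+1) h (by omega))
      omega
  · intro e he
    obtain ⟨he1, he2⟩ := he
    induction e using Sym2.ind with
    | _ u0 v0 =>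
      rw [SimpleGraph.mem_edgeSet] at he1
      rw [splitSizeE_mk] at he2
      have hu0 : ¬ Lf T u0 := by
        intro hL
        have := leaf_splitSide T hL he1
        omega
      have hv0 : ¬ Lf T v0 := by
        intro hL
        have := leaf_splitSide T hL he1.symm
        omega
      obtain ⟨i, hi, rfl⟩ := (hcover u0).resolve_left hu0
      obtain ⟨m, hm, rfl⟩ := (hcover v0).resolve_left hv0
      rcases Nat.lt_trichotomy i m with h | h | h
      · have := hconsec i m h hm he1
        subst this
        exact ⟨i, by omega, rfl⟩
      · subst h
        exact absurd rfl he1.ne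
      · have := hconsec m i h hi he1.symm
        subst this
        exact ⟨m, by omega, Sym2.eq_swap⟩

end Final

section MseqSec

variable {n : ℕ} [Fintype V] (T : PhyloTree n V)

lemma mseq_zero (j : ℕ) (hj : j ≤ 1) : mseq T j = 0 := by
  unfold mseq
  convert Set.ncard_empty (Sym2 V)
  ext e
  simp only [Set.mem_setOf_eq, Set.mem_empty_iff_false, iff_false, not_and]
  intro _ h2 h3
  omega

lemma mseq_eq (hn : 4 ≤ n) (hcat : IsCaterpillar T) (j : ℕ) (hj2 : 2 ≤ j)
    (hjn : j ≤ n / 2) : mseq T j = min (2 * j - 2) (n - 3) := by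
  classical
  obtain ⟨c, hadj, hsides, hinj, hchar⟩ := spine T hn hcat
  have hssz : ∀ i, i ≤ n-4 → splitSizeE T s(c i, c (i+1)) = min (i+2) (n-(i+2)) := by
    intro i hi
    rw [splitSizeE_mk, (hsides i hi).1, (hsides i hi).2]
  unfold mseq
  have hset : {e : Sym2 V | e ∈ T.G.edgeSet ∧ 2 ≤ splitSizeE T e ∧ splitSizeE T e ≤ j} =
      (fun i => s(c i, c (i+1))) '' {i : ℕ | i ≤ n-4 ∧ min (i+2) (n-(i+2)) ≤ j} := by
    ext e
    constructor
    · rintro ⟨h1, h2, h3⟩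
      obtain ⟨i, hi, rfl⟩ := hchar e ⟨h1, h2⟩
      exact ⟨i, ⟨hi, by rw [hssz i hi] at h3; exact h3⟩, rfl⟩
    · rintro ⟨i, ⟨hi, hmin⟩, rfl⟩
      refine ⟨(T.G.mem_edgeSet).mpr (hadj i hi), ?_, ?_⟩
      · rw [hssz i hi]
        omega
      · rw [hssz i hi]
        exact hmin
  rw [hset, Set.ncard_image_of_injOn (fun i1 h1 i2 h2 heq => hinj i1 i2 h1.1 h2.1 heq)]
  have hfin : {i : ℕ | i ≤ n-4 ∧ min (i+2) (n-(i+2)) ≤ j} =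
      ↑((Finset.range (n-3)).filter (fun i => min (i+2) (n-(i+2)) ≤ j)) := by
    ext i
    simp only [Set.mem_setOf_eq, Finset.coe_filter, Finset.mem_range]
    constructor
    · rintro ⟨h1, h2⟩; exact ⟨by omega, h2⟩
    · rintro ⟨h1, h2⟩; exact ⟨by omega, h2⟩
  rw [hfin, Set.ncard_coe_finset]
  have hsplit := Finset.card_filter_add_card_filter_not
    (s := Finset.range (n-3)) (p := fun i => min (i+2) (n-(i+2)) ≤ j)
  have hneg : (Finset.range (n-3)).filter (fun i => ¬ (min (i+2) (n-(i+2)) ≤ j)) =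
      Finset.Ico (j-1) (n-2-j) := by
    ext i
    simp only [Finset.mem_filter, Finset.mem_range, Finset.mem_Ico]
    omega
  rw [hneg] at hsplit
  rw [Finset.card_range, Nat.card_Ico] at hsplit
  omega

end MseqSec

end PhyloAux

/-- The split size sequence of a caterpillar: `s(τ_c)_i = ⌊(i+3)/2⌋` and
`m(τ_c)_j = min(2j-2, n-3)`. -/
theorem stmt_4 {n : ℕ} (hn : 4 ≤ n) {V : Type} [Fintype V]
    (Tc : PhyloTree n V) (hTc : IsCaterpillar Tc) :
    (∀ i, 1 ≤ i → i ≤ n - 3 → sseq Tc i = (i + 3) / 2) ∧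
    (∀ j, 2 ≤ j → j ≤ n / 2 → mseq Tc j = min (2 * j - 2) (n - 3)) := by
  have hm : ∀ j, 2 ≤ j → j ≤ n / 2 → mseq Tc j = min (2 * j - 2) (n - 3) :=
    fun j h1 h2 => PhyloAux.mseq_eq Tc hn hTc j h1 h2
  refine ⟨?_, hm⟩
  intro i hi1 hi2
  set t := (i + 3) / 2 with ht
  have ht2 : 2 ≤ t := by omega
  have htn : t ≤ n / 2 := by omega
  have hmt : i ≤ mseq Tc t := by
    rw [hm t ht2 htn]
    omega
  unfold sseq
  have hne : Set.Nonempty {j | i ≤ mseq Tc j} := ⟨t, hmt⟩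
  apply le_antisymm (Nat.sInf_le (show t ∈ {j | i ≤ mseq Tc j} from hmt))
  by_contra hlt
  push_neg at hlt
  have hmem : i ≤ mseq Tc (sInf {j | i ≤ mseq Tc j}) := Nat.sInf_mem hne
  set s0 := sInf {j | i ≤ mseq Tc j} with hs0
  rcases Nat.lt_or_ge s0 2 with h | h
  · rw [PhyloAux.mseq_zero Tc s0 (by omega)] at hmem
    omega
  · have hs0n : s0 ≤ n / 2 := by omega
    rw [hm s0 h hs0n] at hmem
    omega
end

section
/- There is no binary phylogenetic tree on 8 leaves whose split size sequence equals (2,2,2,2,3); that is, (2,2,2,2,3) ∉ S_8. -/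
open SimpleGraph

variable {n : ℕ} {V : Type} [Fintype V]

set_option linter.unusedSectionVars false
set_option linter.unusedVariables false
set_option maxHeartbeats 1000000


section Aux

variable {V : Type} [Fintype V]

/-- The set of vertices on the `u` side after deleting edge `{u,v}`. -/
def Side (G : SimpleGraph V) (u v : V) : Set V :=
  {x | (G.deleteEdges {s(u, v)}).Reachable x u}

lemma mem_side_self (G : SimpleGraph V) (u v : V) : u ∈ Side G u v := Reachable.refl u

lemma not_reach_of_adj {G : SimpleGraph V} (hT : G.IsTree) {u v : V} (h : G.Adj u v) :
    ¬ (G.deleteEdges {s(u,v)}).Reachable u v := by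
  have := (isAcyclic_iff_forall_edge_isBridge.mp hT.2) (G.mem_edgeSet.mpr h)
  rw [isBridge_iff] at this
  exact this

lemma side_symm_eq (G : SimpleGraph V) (u v : V) :
    Side G v u = {x | (G.deleteEdges {s(u, v)}).Reachable x v} := by
  unfold Side
  rw [Sym2.eq_swap]

lemma mem_side_of_reach {G : SimpleGraph V} {u v x y : V}
    (h : (G.deleteEdges {s(u, v)}).Reachable x y) (hy : y ∈ Side G u v) : x ∈ Side G u v :=
  h.trans hy

/-- The two sides of an edge are disjoint (tree). -/
lemma side_disjoint {G : SimpleGraph V} (hT : G.IsTree) {u v : V} (h : G.Adj u v) :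
    Side G u v ∩ Side G v u = ∅ := by
  ext x
  simp only [Set.mem_inter_iff, Set.mem_empty_iff_false, iff_false, not_and]
  intro hx hx'
  rw [side_symm_eq] at hx'
  exact not_reach_of_adj hT h (hx.symm.trans hx')

lemma mem_side_symm_of_reach {G : SimpleGraph V} {u v x y : V}
    (h : (G.deleteEdges {s(u, v)}).Reachable x y) (hy : y ∈ Side G v u) : x ∈ Side G v u := by
  rw [side_symm_eq G u v] at hy ⊢
  exact h.trans hy

private lemma side_cover_aux {G : SimpleGraph V} {u v : V} :
    ∀ {x y : V} (_ : G.Walk x y),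
      (G.deleteEdges {s(u,v)}).Reachable x y ∨
        (x ∈ Side G u v ∪ Side G v u ∧ y ∈ Side G u v ∪ Side G v u) := by
  intro x y W
  induction W with
  | nil => exact Or.inl (Reachable.refl _)
  | @cons a b c hab W ih =>
    by_cases he : s(a, b) = s(u, v)
    · right
      have hmem : ∀ w : V, w = u ∨ w = v → w ∈ Side G u v ∪ Side G v u := by
        intro w hw
        rcases hw with h | h
        · rw [h]; exact Or.inl (mem_side_self G u v)
        · rw [h]; exact Or.inr (mem_side_self G v u)
      rw [Sym2.eq_iff] at he
      have ha : a ∈ Side G u v ∪ Side G v u := by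
        rcases he with ⟨h1, _⟩ | ⟨h1, _⟩
        · exact hmem a (Or.inl h1)
        · exact hmem a (Or.inr h1)
      have hb : b ∈ Side G u v ∪ Side G v u := by
        rcases he with ⟨_, h2⟩ | ⟨_, h2⟩
        · exact hmem b (Or.inr h2)
        · exact hmem b (Or.inl h2)
      refine ⟨ha, ?_⟩
      rcases ih with hr | ⟨_, hc⟩
      · rcases hb with hb | hb
        · exact Or.inl (mem_side_of_reach hr.symm hb)
        · exact Or.inr (mem_side_symm_of_reach hr.symm hb)
      · exact hc
    · have hadj : (G.deleteEdges {s(u,v)}).Adj a b := by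
        rw [deleteEdges_adj]
        exact ⟨hab, by simpa using he⟩
      rcases ih with hr | ⟨hb, hc⟩
      · exact Or.inl (hadj.reachable.trans hr)
      · refine Or.inr ⟨?_, hc⟩
        rcases hb with hb | hb
        · exact Or.inl (mem_side_of_reach hadj.reachable hb)
        · exact Or.inr (mem_side_symm_of_reach hadj.reachable hb)

/-- Every vertex is on one of the two sides. -/
lemma side_cover {G : SimpleGraph V} (hT : G.IsTree) {u v : V} (x : V) :
    x ∈ Side G u v ∨ x ∈ Side G v u := by
  obtain ⟨W⟩ := (hT.1 x u)
  rcases side_cover_aux (u := u) (v := v) W with hr | ⟨hx, _⟩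
  · exact Or.inl hr
  · exact hx

/-- Walks avoiding the edge `{c,a}` that end at `c` never visit `a`. -/
lemma not_mem_walk_support {G : SimpleGraph V} (hT : G.IsTree) {a c x : V} (hac : G.Adj a c)
    (W : (G.deleteEdges {s(c, a)}).Walk x c) : a ∉ W.support := by
  classical
  intro ha
  have h2 : (G.deleteEdges {s(c, a)}).Reachable a c := ⟨W.dropUntil a ha⟩
  rw [show s(c, a) = s(a, c) from Sym2.eq_swap] at h2
  exact not_reach_of_adj hT hac h2

lemma not_mem_side_far {G : SimpleGraph V} (hT : G.IsTree) {a c : V} (hac : G.Adj a c) :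
    a ∉ Side G c a := by
  intro h
  have h2 : (G.deleteEdges {s(c,a)}).Reachable a c := h
  rw [show s(c, a) = s(a, c) from Sym2.eq_swap] at h2
  exact not_reach_of_adj hT hac h2

/-- Nesting: the branch at `c` beyond `a` is inside the branch at `a` beyond `u`. -/
lemma side_nested {G : SimpleGraph V} (hT : G.IsTree) {u a c : V}
    (hua : G.Adj u a) (hac : G.Adj a c) (hcu : c ≠ u) :
    Side G c a ⊆ Side G a u := by
  intro x hx
  obtain ⟨W⟩ := hx
  have haW : a ∉ W.support := not_mem_walk_support hT hac W
  -- transfer W to G.deleteEdges {s(a,u)}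
  have hedges : ∀ e ∈ W.edges, e ∈ (G.deleteEdges {s(a, u)}).edgeSet := by
    intro e heW
    have he : e ∈ (G.deleteEdges {s(c, a)}).edgeSet := W.edges_subset_edgeSet heW
    rw [edgeSet_deleteEdges] at he ⊢
    refine ⟨he.1, ?_⟩
    simp only [Set.mem_singleton_iff]
    intro hcon
    subst hcon
    exact haW (W.fst_mem_support_of_mem_edges heW)
  have W' := W.transfer (G.deleteEdges {s(a, u)}) hedges
  have hca : (G.deleteEdges {s(a, u)}).Adj c a := by
    rw [deleteEdges_adj]
    refine ⟨hac.symm, ?_⟩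
    simp only [Set.mem_singleton_iff, Sym2.eq_iff]
    rintro (⟨rfl, rfl⟩ | ⟨rfl, _⟩)
    · exact hac.ne rfl
    · exact hcu rfl
  have hr : (G.deleteEdges {s(a, u)}).Reachable x c := ⟨W'⟩
  exact hr.trans hca.reachable

/-- Two branches at a vertex are disjoint. -/
lemma side_branch_disjoint {G : SimpleGraph V} (hT : G.IsTree) {a c d : V}
    (hac : G.Adj a c) (had : G.Adj a d) (hcd : c ≠ d) :
    Side G c a ∩ Side G d a = ∅ := by
  classical
  ext x
  simp only [Set.mem_inter_iff, Set.mem_empty_iff_false, iff_false, not_and]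
  intro hxc hxd
  obtain ⟨W1⟩ := hxc
  obtain ⟨W2⟩ := hxd
  have ha1 : a ∉ W1.support := not_mem_walk_support hT hac W1
  have ha2 : a ∉ W2.support := not_mem_walk_support hT had W2
  -- build a path from c to d in G avoiding a
  have hsub1 : ∀ e ∈ W1.edges, e ∈ G.edgeSet := by
    intro e he
    have h := W1.edges_subset_edgeSet he
    rw [edgeSet_deleteEdges] at h
    exact h.1
  have hsub2 : ∀ e ∈ W2.edges, e ∈ G.edgeSet := by
    intro e he
    have h := W2.edges_subset_edgeSet he
    rw [edgeSet_deleteEdges] at h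
    exact h.1
  have ha1' : a ∉ (W1.transfer G hsub1).support := by
    rw [Walk.support_transfer]; exact ha1
  have ha2' : a ∉ (W2.transfer G hsub2).support := by
    rw [Walk.support_transfer]; exact ha2
  set Wcd : G.Walk c d := ((W1.transfer G hsub1).reverse.append (W2.transfer G hsub2)) with hWcd
  have haW : a ∉ Wcd.support := by
    rw [hWcd]
    intro h
    rcases (Walk.mem_support_append_iff _ _).mp h with h | h
    · rw [Walk.support_reverse, List.mem_reverse] at h
      exact ha1' h
    · exact ha2' h
  have hp1 : Wcd.toPath.1.IsPath := Wcd.toPath.2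
  have haP : a ∉ Wcd.toPath.1.support := fun h => haW (Walk.support_toPath_subset _ h)
  -- the explicit path c - a - d
  have hP2 : (Walk.cons hac.symm (Walk.cons had Walk.nil) : G.Walk c d).IsPath := by
    simp only [Walk.isPath_def, Walk.support_cons, Walk.support_nil]
    simp only [List.nodup_cons, List.mem_cons, List.mem_singleton, List.not_mem_nil,
      not_or, List.nodup_nil, and_true]
    refine ⟨⟨fun h => hac.ne h.symm, hcd, not_false⟩, ⟨fun h => had.ne h, not_false⟩, ?_⟩
    trivial
  have := (hT.existsUnique_path c d).unique hp1 hP2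
  rw [this] at haP
  simp [Walk.support_cons] at haP
end Aux

section Phylo

open SimpleGraph

variable {V : Type} [Fintype V]

variable {n : ℕ}

/-- The set of leaf labels on the `u` side. -/
def LS (T : PhyloTree n V) (u v : V) : Set (Fin n) := {i | T.leaf i ∈ Side T.G u v}

lemma ls_disjoint (T : PhyloTree n V) {u v : V} (h : T.G.Adj u v) :
    LS T u v ∩ LS T v u = ∅ := by
  ext i
  simp only [Set.mem_inter_iff, Set.mem_empty_iff_false, iff_false, not_and]
  intro h1 h2
  have := side_disjoint T.isTree h
  have : T.leaf i ∈ Side T.G u v ∩ Side T.G v u := ⟨h1, h2⟩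
  rw [side_disjoint T.isTree h] at this
  exact this

lemma ls_cover (T : PhyloTree n V) {u v : V} (i : Fin n) :
    i ∈ LS T u v ∪ LS T v u := by
  rcases side_cover T.isTree (u := u) (v := v) (T.leaf i) with h | h
  · exact Or.inl h
  · exact Or.inr h

lemma ls_compl (T : PhyloTree n V) {u v : V} (h : T.G.Adj u v) :
    LS T v u = (LS T u v)ᶜ := by
  ext i
  constructor
  · intro hi hi'
    have : i ∈ LS T u v ∩ LS T v u := ⟨hi', hi⟩
    rw [ls_disjoint T h] at this
    exact this
  · intro hi
    rcases ls_cover T (u := u) (v := v) i with h1 | h1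
    · exact absurd h1 hi
    · exact h1

lemma ls_ncard_add (T : PhyloTree n V) {u v : V} (h : T.G.Adj u v) :
    (LS T u v).ncard + (LS T v u).ncard = n := by
  rw [ls_compl T h]
  have := Set.ncard_add_ncard_compl (LS T u v)
  rw [this]
  simp [Set.ncard_univ]

/-- Every branch contains a leaf. -/
lemma exists_leaf_side_aux (T : PhyloTree n V) (hbin : ∀ v : V,
    (T.G.neighborSet v).ncard = 1 ∨ (T.G.neighborSet v).ncard = 3) :
    ∀ (N : ℕ) (w z : V), T.G.Adj w z → (Side T.G w z).ncard ≤ N →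
      ∃ i, T.leaf i ∈ Side T.G w z := by
  intro N
  induction N with
  | zero =>
    intro w z hadj hle
    exfalso
    have : (Side T.G w z).ncard ≠ 0 := by
      intro h
      rw [Set.ncard_eq_zero (Set.toFinite _)] at h
      have := mem_side_self T.G w z
      rw [h] at this
      exact this
    omega
  | succ N ih =>
    intro w z hadj hle
    rcases hbin w with h1 | h3
    · obtain ⟨i, hi⟩ := (T.leaf_iff w).1 h1
      exact ⟨i, by rw [hi]; exact mem_side_self T.G w z⟩
    · -- pick a neighbor a ≠ z
      have : ¬ (T.G.neighborSet w ⊆ {z}) := by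
        intro hsub
        have := Set.ncard_le_ncard hsub (Set.toFinite _)
        rw [Set.ncard_singleton] at this
        omega
      obtain ⟨a, ha, haz⟩ := Set.not_subset.mp this
      simp only [Set.mem_singleton_iff] at haz
      have hwa : T.G.Adj w a := ha
      have hsub : Side T.G a w ⊆ Side T.G w z :=
        side_nested T.isTree hadj.symm hwa haz
      have hss : Side T.G a w ⊂ Side T.G w z :=
        ⟨hsub, fun hsub' => not_mem_side_far T.isTree hwa (hsub' (mem_side_self T.G w z))⟩
      have hlt : (Side T.G a w).ncard < (Side T.G w z).ncard :=
        Set.ncard_lt_ncard hss (Set.toFinite _)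
      obtain ⟨i, hi⟩ := ih a w hwa.symm (by omega)
      exact ⟨i, hsub hi⟩

lemma exists_leaf_side (T : PhyloTree n V) (hbin : ∀ v : V,
    (T.G.neighborSet v).ncard = 1 ∨ (T.G.neighborSet v).ncard = 3)
    {w z : V} (hadj : T.G.Adj w z) : ∃ i, T.leaf i ∈ Side T.G w z :=
  exists_leaf_side_aux T hbin (Side T.G w z).ncard w z hadj le_rfl

/-- The side of a degree-one vertex is a singleton. -/
lemma side_of_leaf (T : PhyloTree n V) {x v : V} (h1 : (T.G.neighborSet x).ncard = 1)
    (hadj : T.G.Adj x v) : Side T.G x v = {x} := by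
  have hnb : T.G.neighborSet x = {v} := by
    obtain ⟨a, ha⟩ := Set.ncard_eq_one.mp h1
    have : v ∈ T.G.neighborSet x := hadj
    rw [ha] at this ⊢
    simp only [Set.mem_singleton_iff] at this
    rw [this]
  apply Set.eq_singleton_iff_unique_mem.mpr
  refine ⟨mem_side_self T.G x v, ?_⟩
  intro y hy
  obtain ⟨W⟩ := (hy : (T.G.deleteEdges {s(x,v)}).Reachable y x).symm
  cases W with
  | nil => rfl
  | cons hxb W' =>
    exfalso
    rw [deleteEdges_adj] at hxb
    have hb : _ ∈ T.G.neighborSet x := hxb.1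
    rw [hnb] at hb
    simp only [Set.mem_singleton_iff] at hb
    exact hxb.2 (by rw [hb]; exact rfl)

end Phylo

section Cherry

variable {V : Type} [Fintype V] {n : ℕ}

lemma exists_pair_of_ncard_three {s : Set V} (h : s.ncard = 3) {v : V} (hv : v ∈ s) :
    ∃ a b, a ≠ b ∧ a ≠ v ∧ b ≠ v ∧ s = {v, a, b} := by
  obtain ⟨x, y, z, hxy, hxz, hyz, rfl⟩ := Set.ncard_eq_three.mp h
  simp only [Set.mem_insert_iff, Set.mem_singleton_iff] at hv
  rcases hv with rfl | rfl | rfl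
  · exact ⟨y, z, hyz, fun h => hxy h.symm, fun h => hxz h.symm, rfl⟩
  · refine ⟨x, z, hxz, hxy, fun h => hyz h.symm, ?_⟩
    ext w; simp only [Set.mem_insert_iff, Set.mem_singleton_iff]; tauto
  · refine ⟨x, y, hxy, hxz, hyz, ?_⟩
    ext w; simp only [Set.mem_insert_iff, Set.mem_singleton_iff]; tauto

lemma not_leaf_vertex_of_ls (T : PhyloTree n V) {u v : V} (hadj : T.G.Adj u v)
    (h2 : (LS T u v).ncard = 2) : (T.G.neighborSet u).ncard ≠ 1 := by
  intro h1
  have hs := side_of_leaf T h1 hadj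
  have : LS T u v ⊆ {i | T.leaf i = u} := by
    intro i hi
    have : T.leaf i ∈ Side T.G u v := hi
    rw [hs] at this
    exact this
  have hsub : (LS T u v).Subsingleton := by
    intro i hi j hj
    exact T.leaf_inj ((this hi).trans (this hj).symm)
  rcases hsub.eq_empty_or_singleton with h | ⟨a, h⟩
  · rw [h] at h2; simp at h2
  · rw [h] at h2; simp at h2

/-- The small side of a size-2 split is a cherry. -/
lemma cherry (T : PhyloTree n V) (hbin : ∀ v : V,
    (T.G.neighborSet v).ncard = 1 ∨ (T.G.neighborSet v).ncard = 3)
    {u v : V} (hadj : T.G.Adj u v) (h2 : (LS T u v).ncard = 2) :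
    ∃ i j, i ≠ j ∧ T.G.neighborSet u = {v, T.leaf i, T.leaf j} ∧ LS T u v = {i, j} := by
  have hdeg : (T.G.neighborSet u).ncard = 3 :=
    (hbin u).resolve_left (not_leaf_vertex_of_ls T hadj h2)
  obtain ⟨a, b, hab, hav, hbv, hnbr⟩ := exists_pair_of_ncard_three hdeg hadj
  have hua : T.G.Adj u a := by rw [← T.G.mem_neighborSet, hnbr]; simp
  have hub : T.G.Adj u b := by rw [← T.G.mem_neighborSet, hnbr]; simp
  have hAu : Side T.G a u ⊆ Side T.G u v := side_nested T.isTree hadj.symm hua hav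
  have hBu : Side T.G b u ⊆ Side T.G u v := side_nested T.isTree hadj.symm hub hbv
  have hdisjAB : Side T.G a u ∩ Side T.G b u = ∅ := side_branch_disjoint T.isTree hua hub hab
  -- every neighbor ≠ v of u must be a leaf image
  have key : ∀ c d : V, T.G.Adj u c → T.G.Adj u d → c ≠ d →
      Side T.G c u ∩ Side T.G d u = ∅ →
      Side T.G c u ⊆ Side T.G u v → Side T.G d u ⊆ Side T.G u v →
      ∃ i, T.leaf i = c := by
    intro c d huc hud hcd hdisj hcu hdu
    by_contra hnl
    push_neg at hnl
    have hdegc : (T.G.neighborSet c).ncard = 3 := by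
      rcases hbin c with h1 | h3
      · obtain ⟨i, hi⟩ := (T.leaf_iff c).1 h1
        exact absurd hi (hnl i)
      · exact h3
    obtain ⟨p, q, hpq, hpu, hqu, hnbrc⟩ := exists_pair_of_ncard_three hdegc huc.symm
    have hcp : T.G.Adj c p := by rw [← T.G.mem_neighborSet, hnbrc]; simp
    have hcq : T.G.Adj c q := by rw [← T.G.mem_neighborSet, hnbrc]; simp
    obtain ⟨k1, hk1⟩ := exists_leaf_side T hbin hcp.symm
    obtain ⟨k2, hk2⟩ := exists_leaf_side T hbin hcq.symm
    obtain ⟨k3, hk3⟩ := exists_leaf_side T hbin hud.symm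
    have hPc : Side T.G p c ⊆ Side T.G c u := side_nested T.isTree huc hcp hpu
    have hQc : Side T.G q c ⊆ Side T.G c u := side_nested T.isTree huc hcq hqu
    have hdisjPQ : Side T.G p c ∩ Side T.G q c = ∅ := side_branch_disjoint T.isTree hcp hcq hpq
    have h12 : k1 ≠ k2 := by
      intro h
      rw [h] at hk1
      have : T.leaf k2 ∈ Side T.G p c ∩ Side T.G q c := ⟨hk1, hk2⟩
      rw [hdisjPQ] at this; exact this
    have h13 : k1 ≠ k3 := by
      intro h
      rw [h] at hk1
      have : T.leaf k3 ∈ Side T.G c u ∩ Side T.G d u := ⟨hPc hk1, hk3⟩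
      rw [hdisj] at this; exact this
    have h23 : k2 ≠ k3 := by
      intro h
      rw [h] at hk2
      have : T.leaf k3 ∈ Side T.G c u ∩ Side T.G d u := ⟨hQc hk2, hk3⟩
      rw [hdisj] at this; exact this
    have hsub3 : ({k1, k2, k3} : Set (Fin n)) ⊆ LS T u v := by
      intro k hk
      simp only [Set.mem_insert_iff, Set.mem_singleton_iff] at hk
      rcases hk with rfl | rfl | rfl
      · exact hcu (hPc hk1)
      · exact hcu (hQc hk2)
      · exact hdu hk3
    have h3card : ({k1, k2, k3} : Set (Fin n)).ncard = 3 :=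
      Set.ncard_eq_three.mpr ⟨k1, k2, k3, h12, h13, h23, rfl⟩
    have := Set.ncard_le_ncard hsub3 (Set.toFinite _)
    omega
  obtain ⟨i, hi⟩ := key a b hua hub hab hdisjAB hAu hBu
  obtain ⟨j, hj⟩ := key b a hub hua (Ne.symm hab)
    (by rw [Set.inter_comm]; exact hdisjAB) hBu hAu
  have hiu : T.leaf i ∈ Side T.G a u := by rw [hi]; exact mem_side_self T.G a u
  have hju : T.leaf j ∈ Side T.G b u := by rw [hj]; exact mem_side_self T.G b u
  have hij : i ≠ j := by
    intro h
    rw [h] at hiu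
    have : T.leaf j ∈ Side T.G a u ∩ Side T.G b u := ⟨hiu, hju⟩
    rw [hdisjAB] at this; exact this
  have hsub : ({i, j} : Set (Fin n)) ⊆ LS T u v := by
    intro k hk
    simp only [Set.mem_insert_iff, Set.mem_singleton_iff] at hk
    rcases hk with rfl | rfl
    · exact hAu hiu
    · exact hBu hju
  have hcard2 : ({i, j} : Set (Fin n)).ncard = 2 := Set.ncard_pair hij
  have heq : ({i, j} : Set (Fin n)) = LS T u v :=
    Set.eq_of_subset_of_ncard_le hsub (by omega) (Set.toFinite _)
  refine ⟨i, j, hij, ?_, heq.symm⟩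
  rw [hnbr, hi, hj]

/-- Uniqueness: two size-2 splits with the same leaf set come from the same edge. -/
lemma edge_eq_of_ls_eq (T : PhyloTree n V) (hbin : ∀ v : V,
    (T.G.neighborSet v).ncard = 1 ∨ (T.G.neighborSet v).ncard = 3)
    {u v x y : V} (hadj1 : T.G.Adj u v) (hadj2 : T.G.Adj x y)
    (h2 : (LS T u v).ncard = 2) (heq : LS T u v = LS T x y) :
    s(u, v) = s(x, y) := by
  obtain ⟨i, j, hij, hnbru, hlsu⟩ := cherry T hbin hadj1 h2
  obtain ⟨i', j', hij', hnbrx, hlsx⟩ := cherry T hbin hadj2 (by rw [← heq]; exact h2)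
  have hsets : ({i, j} : Set (Fin n)) = {i', j'} := by rw [← hlsu, ← hlsx, heq]
  -- leaf i is adjacent to both u and x
  have hiu : T.G.Adj u (T.leaf i) := by rw [← T.G.mem_neighborSet, hnbru]; simp
  have hmem : i ∈ ({i', j'} : Set (Fin n)) := by rw [← hsets]; simp
  have hix : T.G.Adj x (T.leaf i) := by
    rw [← T.G.mem_neighborSet, hnbrx]
    simp only [Set.mem_insert_iff, Set.mem_singleton_iff] at hmem ⊢
    rcases hmem with rfl | rfl
    · simp
    · simp
  have hleafdeg : (T.G.neighborSet (T.leaf i)).ncard = 1 := (T.leaf_iff _).2 ⟨i, rfl⟩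
  obtain ⟨w, hw⟩ := Set.ncard_eq_one.mp hleafdeg
  have hu' : u ∈ T.G.neighborSet (T.leaf i) := hiu.symm
  have hx' : x ∈ T.G.neighborSet (T.leaf i) := hix.symm
  rw [hw] at hu' hx'
  simp only [Set.mem_singleton_iff] at hu' hx'
  have hux : u = x := hu'.trans hx'.symm
  subst hux
  -- now neighbor sets coincide, and v, y are not leaf images
  have hvmem : v ∈ ({y, T.leaf i', T.leaf j'} : Set V) := by
    rw [← hnbrx]; exact hadj1
  have hvnot : ∀ k : Fin n, k ∈ LS T u v → v ≠ T.leaf k := by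
    intro k hk h
    have : T.leaf k ∈ Side T.G u v := hk
    rw [← h] at this
    exact not_mem_side_far T.isTree hadj1.symm this
  have hi'mem : i' ∈ LS T u v := by rw [heq, hlsx]; simp
  have hj'mem : j' ∈ LS T u v := by rw [heq, hlsx]; simp
  have hvy : v = y := by
    simp only [Set.mem_insert_iff, Set.mem_singleton_iff] at hvmem
    rcases hvmem with h | h | h
    · exact h
    · exact absurd h (hvnot i' hi'mem)
    · exact absurd h (hvnot j' hj'mem)
  rw [hvy]

end Cherry

section Compat

variable {V : Type} [Fintype V] {n : ℕ}

/-- If both endpoints of `{u,v}` are on the `x`-side of `{x,y}`, then the `y`-side of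
`{x,y}` is entirely contained in one side of `{u,v}`. -/
lemma side_transfer {G : SimpleGraph V} (hT : G.IsTree) {u v x y : V}
    (hadj1 : G.Adj u v) (hadj2 : G.Adj x y)
    (hu : u ∈ Side G x y) (hv : v ∈ Side G x y) :
    Side G y x ⊆ Side G u v ∨ Side G y x ⊆ Side G v u := by
  have hkey : ∀ w ∈ Side G y x, (G.deleteEdges {s(u, v)}).Reachable w y := by
    intro w hw
    have hw' : (G.deleteEdges {s(y, x)}).Reachable w y := hw
    obtain ⟨W⟩ := hw'
    have hedges : ∀ e ∈ W.edges, e ∈ (G.deleteEdges {s(u, v)}).edgeSet := by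
      intro e heW
      have he := W.edges_subset_edgeSet heW
      rw [edgeSet_deleteEdges] at he ⊢
      refine ⟨he.1, ?_⟩
      simp only [Set.mem_singleton_iff]
      intro hcon
      subst hcon
      -- u is on the walk, so u is reachable to y avoiding {x,y}; contradiction
      have hu' : u ∈ W.support := W.fst_mem_support_of_mem_edges heW
      have : (G.deleteEdges {s(y, x)}).Reachable u y := by
        classical
        exact ⟨W.dropUntil u hu'⟩
      have huyx : u ∈ Side G y x := this
      have : u ∈ Side G x y ∩ Side G y x := ⟨hu, huyx⟩
      rw [side_disjoint hT hadj2] at this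
      exact this
    have W' := W.transfer (G.deleteEdges {s(u, v)}) hedges
    exact ⟨W'⟩
  rcases side_cover hT (u := u) (v := v) y with hy | hy
  · left
    intro w hw
    exact mem_side_of_reach (hkey w hw) hy
  · right
    intro w hw
    exact mem_side_symm_of_reach (hkey w hw) hy

/-- Compatibility of two distinct splits, at the level of leaf sets. -/
lemma ls_compat (T : PhyloTree n V) {u v x y : V}
    (hadj1 : T.G.Adj u v) (hadj2 : T.G.Adj x y) (hne : s(u, v) ≠ s(x, y)) :
    LS T x y ⊆ LS T u v ∨ LS T x y ⊆ LS T v u ∨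
      LS T y x ⊆ LS T u v ∨ LS T y x ⊆ LS T v u := by
  have huvadj : (T.G.deleteEdges {s(x, y)}).Adj u v := by
    rw [deleteEdges_adj]
    exact ⟨hadj1, by simpa using hne⟩
  have hls : ∀ {a b : V}, Side T.G a b ⊆ Side T.G u v → LS T a b ⊆ LS T u v := by
    intro a b h i hi
    exact h hi
  have hls' : ∀ {a b : V}, Side T.G a b ⊆ Side T.G v u → LS T a b ⊆ LS T v u := by
    intro a b h i hi
    exact h hi
  rcases side_cover T.isTree (u := x) (v := y) u with hu | hu
  · have hv : v ∈ Side T.G x y := mem_side_of_reach huvadj.symm.reachable hu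
    rcases side_transfer T.isTree hadj1 hadj2 hu hv with h | h
    · exact Or.inr (Or.inr (Or.inl (hls h)))
    · exact Or.inr (Or.inr (Or.inr (hls' h)))
  · have hv : v ∈ Side T.G y x := by
      apply mem_side_symm_of_reach (u := x) (v := y) huvadj.symm.reachable hu
    have hu' : u ∈ Side T.G y x := hu
    rcases side_transfer T.isTree hadj1 hadj2.symm hu' hv with h | h
    · exact Or.inl (hls h)
    · exact Or.inr (Or.inl (hls' h))

end Compat


section Final

variable {V : Type} [Fintype V]

lemma splitSizeE_mk {n : ℕ} (T : PhyloTree n V) (u v : V) :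
    splitSizeE T s(u, v) = min (LS T u v).ncard (LS T v u).ncard := rfl

lemma orient (T : PhyloTree 8 V) {e : Sym2 V} (he : e ∈ T.G.edgeSet) {k : ℕ}
    (hk : 2 * k < 8) (hs : splitSizeE T e = k) :
    ∃ x y, e = s(x, y) ∧ T.G.Adj x y ∧ (LS T x y).ncard = k ∧ (LS T y x).ncard = 8 - k := by
  induction e with
  | _ x y =>
    have hadj : T.G.Adj x y := T.G.mem_edgeSet.mp he
    have hadd := ls_ncard_add T hadj
    rw [splitSizeE_mk] at hs
    rcases le_total ((LS T x y).ncard) ((LS T y x).ncard) with h | h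
    · rw [min_eq_left h] at hs
      exact ⟨x, y, rfl, hadj, hs, by omega⟩
    · rw [min_eq_right h] at hs
      refine ⟨y, x, Sym2.eq_swap, hadj.symm, hs, by omega⟩

lemma two_splits_disjoint (T : PhyloTree 8 V) (hbin : ∀ v : V,
    (T.G.neighborSet v).ncard = 1 ∨ (T.G.neighborSet v).ncard = 3)
    {x y p q : V} (h1 : T.G.Adj x y) (h2 : T.G.Adj p q)
    (hxy2 : (LS T x y).ncard = 2) (hpq2 : (LS T p q).ncard = 2)
    (hne : s(x, y) ≠ s(p, q)) : LS T x y ∩ LS T p q = ∅ := by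
  have haddp := ls_ncard_add T h2
  have hqp6 : (LS T q p).ncard = 6 := by omega
  rcases ls_compat T h1 h2 hne with hc | hc | hc | hc
  · exfalso
    have heq : LS T x y = LS T p q :=
      (Set.eq_of_subset_of_ncard_le hc (by omega) (Set.toFinite _)).symm
    exact hne (edge_eq_of_ls_eq T hbin h1 h2 hxy2 heq)
  · rw [ls_compl T h1] at hc
    ext i
    simp only [Set.mem_inter_iff, Set.mem_empty_iff_false, iff_false, not_and]
    intro hi hi'
    exact (hc hi') hi
  · exfalso
    have := Set.ncard_le_ncard hc (Set.toFinite _)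
    omega
  · exfalso
    rw [ls_compl T h1, ls_compl T h2] at hc
    have hsub : LS T x y ⊆ LS T p q := Set.compl_subset_compl.mp hc
    have heq : LS T x y = LS T p q :=
      Set.eq_of_subset_of_ncard_le hsub (by omega) (Set.toFinite _)
    exact hne (edge_eq_of_ls_eq T hbin h1 h2 hxy2 heq)

lemma split_subset_or_disjoint (T : PhyloTree 8 V) {u v x y : V}
    (hadj1 : T.G.Adj u v) (hadj2 : T.G.Adj x y)
    (hA3 : (LS T u v).ncard = 3) (hxy2 : (LS T x y).ncard = 2)
    (hne : s(u, v) ≠ s(x, y)) :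
    LS T x y ⊆ LS T u v ∨ LS T u v ∩ LS T x y = ∅ := by
  have hadd1 := ls_ncard_add T hadj1
  have hadd2 := ls_ncard_add T hadj2
  have hyx6 : (LS T y x).ncard = 6 := by omega
  rcases ls_compat T hadj1 hadj2 hne with hc | hc | hc | hc
  · exact Or.inl hc
  · right
    rw [ls_compl T hadj1] at hc
    ext i
    simp only [Set.mem_inter_iff, Set.mem_empty_iff_false, iff_false, not_and]
    intro hi hi'
    exact (hc hi') hi
  · exfalso
    have := Set.ncard_le_ncard hc (Set.toFinite _)
    omega
  · exfalso
    have := Set.ncard_le_ncard hc (Set.toFinite _)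
    omega

end Final

/-- `(2,2,2,2,3) ∉ S_8`: no binary phylogenetic tree on 8 leaves has this
split size sequence. -/
theorem stmt_9 :
    ¬ ∃ (V : Type) (_ : Fintype V) (T : PhyloTree 8 V), IsBinary T ∧
      sseq T 1 = 2 ∧ sseq T 2 = 2 ∧ sseq T 3 = 2 ∧ sseq T 4 = 2 ∧ sseq T 5 = 3 := by
  rintro ⟨V, hV, T, hbin, -, -, -, h4, h5⟩
  classical
  haveI : DecidableEq V := Classical.decEq V
  have hbin' : ∀ v : V, (T.G.neighborSet v).ncard = 1 ∨ (T.G.neighborSet v).ncard = 3 := hbin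
  -- extract mseq facts
  have hm2 : 4 ≤ mseq T 2 := by
    have hne : {j | 4 ≤ mseq T j}.Nonempty := by
      by_contra h
      rw [Set.not_nonempty_iff_eq_empty] at h
      simp only [sseq, h, Nat.sInf_empty] at h4
      omega
    have hmem := Nat.sInf_mem hne
    simp only [sseq] at h4
    rw [h4] at hmem
    exact hmem
  have hm3 : 5 ≤ mseq T 3 := by
    have hne : {j | 5 ≤ mseq T j}.Nonempty := by
      by_contra h
      rw [Set.not_nonempty_iff_eq_empty] at h
      simp only [sseq, h, Nat.sInf_empty] at h5
      omega
    have hmem := Nat.sInf_mem hne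
    simp only [sseq] at h5
    rw [h5] at hmem
    exact hmem
  have hm2' : mseq T 2 ≤ 4 := by
    by_contra h
    push_neg at h
    have h2mem : 2 ∈ {j | 5 ≤ mseq T j} := h
    have := Nat.sInf_le h2mem
    simp only [sseq] at h5
    omega
  -- the set of size-2 splits has ncard 4
  have hE2eq : {e : Sym2 V | e ∈ T.G.edgeSet ∧ 2 ≤ splitSizeE T e ∧ splitSizeE T e ≤ 2}
      = {e : Sym2 V | e ∈ T.G.edgeSet ∧ splitSizeE T e = 2} := by
    ext e
    simp only [Set.mem_setOf_eq]
    constructor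
    · rintro ⟨h1, h2, h3⟩; exact ⟨h1, by omega⟩
    · rintro ⟨h1, h2⟩; exact ⟨h1, by omega, by omega⟩
  have hE2card : ({e : Sym2 V | e ∈ T.G.edgeSet ∧ splitSizeE T e = 2}).ncard = 4 := by
    have hm : mseq T 2 = 4 := le_antisymm hm2' hm2
    simp only [mseq] at hm
    rw [hE2eq] at hm
    exact hm
  -- a split of size 3 exists
  have hsub : ¬ ({e : Sym2 V | e ∈ T.G.edgeSet ∧ 2 ≤ splitSizeE T e ∧ splitSizeE T e ≤ 3}
      ⊆ {e : Sym2 V | e ∈ T.G.edgeSet ∧ splitSizeE T e = 2}) := by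
    intro h
    have hle := Set.ncard_le_ncard h (Set.toFinite _)
    simp only [mseq] at hm3
    omega
  obtain ⟨e3, he3m, he3n⟩ := Set.not_subset.mp hsub
  have he3E : e3 ∈ T.G.edgeSet := he3m.1
  have he3s : splitSizeE T e3 = 3 := by
    rcases he3m with ⟨hE, h23, h33⟩
    by_contra h
    exact he3n ⟨hE, by omega⟩
  obtain ⟨u, v, he3uv, hadjuv, hA3, hA5⟩ := orient T he3E (by norm_num) he3s
  -- choose orientations for all size-2 splits
  set E2 : Set (Sym2 V) := {e : Sym2 V | e ∈ T.G.edgeSet ∧ splitSizeE T e = 2} with hE2def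
  have hrep : ∀ f : Sym2 V, ∃ x y : V, f ∈ E2 →
      (f = s(x, y) ∧ T.G.Adj x y ∧ (LS T x y).ncard = 2 ∧ (LS T y x).ncard = 6) := by
    intro f
    by_cases hf : f ∈ E2
    · obtain ⟨x, y, ha, hb, hc, hd⟩ := orient T hf.1 (by norm_num) hf.2
      exact ⟨x, y, fun _ => ⟨ha, hb, hc, hd⟩⟩
    · exact ⟨u, u, fun h => absurd h hf⟩
  choose xf yf hxy using hrep
  have hfeq : ∀ f (hf : f ∈ E2), f = s(xf f, yf f) := fun f hf => (hxy f hf).1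
  have hfadj : ∀ f (hf : f ∈ E2), T.G.Adj (xf f) (yf f) := fun f hf => (hxy f hf).2.1
  have hf2 : ∀ f (hf : f ∈ E2), (LS T (xf f) (yf f)).ncard = 2 := fun f hf => (hxy f hf).2.2.1
  -- Finset counting
  have hfinE2 : E2.Finite := Set.toFinite _
  set F2 : Finset (Sym2 V) := hfinE2.toFinset with hF2def
  have hmemF2 : ∀ f, f ∈ F2 ↔ f ∈ E2 := fun f => hfinE2.mem_toFinset
  have hF2card : F2.card = 4 := by
    rw [← Set.ncard_eq_toFinset_card E2 hfinE2]
    exact hE2card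
  set g : Sym2 V → Finset (Fin 8) :=
    fun f => if h : f ∈ E2 then (Set.toFinite (LS T (xf f) (yf f))).toFinset else ∅ with hgdef
  have hgcard : ∀ f ∈ F2, (g f).card = 2 := by
    intro f hf
    rw [hmemF2] at hf
    simp only [hgdef, dif_pos hf]
    rw [← Set.ncard_eq_toFinset_card _ (Set.toFinite _)]
    exact hf2 f hf
  have hgmem : ∀ f (hf : f ∈ E2) (i : Fin 8), i ∈ g f ↔ i ∈ LS T (xf f) (yf f) := by
    intro f hf i
    simp only [hgdef, dif_pos hf, Set.Finite.mem_toFinset]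
  have hgdisj : ∀ f ∈ F2, ∀ f' ∈ F2, f ≠ f' → Disjoint (g f) (g f') := by
    intro f hf f' hf' hne
    rw [hmemF2] at hf hf'
    rw [Finset.disjoint_left]
    intro i hi hi'
    rw [hgmem f hf] at hi
    rw [hgmem f' hf'] at hi'
    have hnee : s(xf f, yf f) ≠ s(xf f', yf f') := by
      rw [← hfeq f hf, ← hfeq f' hf']
      exact hne
    have := two_splits_disjoint T hbin' (hfadj f hf) (hfadj f' hf')
      (hf2 f hf) (hf2 f' hf') hnee
    have hmemi : i ∈ LS T (xf f) (yf f) ∩ LS T (xf f') (yf f') := ⟨hi, hi'⟩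
    rw [this] at hmemi
    exact hmemi
  have hbiU : F2.biUnion g = Finset.univ := by
    apply Finset.eq_univ_of_card
    rw [Finset.card_biUnion hgdisj]
    rw [Finset.sum_congr rfl hgcard]
    simp [hF2card]
  -- the 3-side
  set Afin : Finset (Fin 8) := (Set.toFinite (LS T u v)).toFinset with hAdef
  have hAcard : Afin.card = 3 := by
    rw [← Set.ncard_eq_toFinset_card _ (Set.toFinite _)]
    exact hA3
  have hAmem : ∀ i, i ∈ Afin ↔ i ∈ LS T u v := fun i => Set.Finite.mem_toFinset _
  -- intersection with each cherry is empty or full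
  have hAg : ∀ f ∈ F2, (Afin ∩ g f).card = 0 ∨ (Afin ∩ g f).card = 2 := by
    intro f hf
    rw [hmemF2] at hf
    have hnee : s(u, v) ≠ s(xf f, yf f) := by
      intro h
      have : splitSizeE T s(u, v) = 2 := by
        rw [h, ← hfeq f hf]
        exact hf.2
      rw [← he3uv, he3s] at this
      omega
    rcases split_subset_or_disjoint T hadjuv (hfadj f hf) hA3 (hf2 f hf) hnee with hc | hc
    · right
      have : Afin ∩ g f = g f := by
        apply Finset.inter_eq_right.mpr
        intro i hi
        rw [hgmem f hf] at hi
        rw [hAmem]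
        exact hc hi
      rw [this]
      exact hgcard f (by rw [hmemF2]; exact hf)
    · left
      rw [Finset.card_eq_zero, Finset.eq_empty_iff_forall_notMem]
      intro i hi
      rw [Finset.mem_inter, hAmem, hgmem f hf] at hi
      have : i ∈ LS T u v ∩ LS T (xf f) (yf f) := ⟨hi.1, hi.2⟩
      rw [hc] at this
      exact this
  -- final parity contradiction
  have hsplit : Afin = F2.biUnion (fun f => Afin ∩ g f) := by
    ext i
    simp only [Finset.mem_biUnion, Finset.mem_inter]
    constructor
    · intro hi
      have : i ∈ F2.biUnion g := by rw [hbiU]; exact Finset.mem_univ i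
      rw [Finset.mem_biUnion] at this
      obtain ⟨f, hf, hif⟩ := this
      exact ⟨f, hf, hi, hif⟩
    · rintro ⟨f, hf, hi, -⟩
      exact hi
  have hdisj' : ∀ f ∈ F2, ∀ f' ∈ F2, f ≠ f' →
      Disjoint (Afin ∩ g f) (Afin ∩ g f') := by
    intro f hf f' hf' hne
    exact Finset.disjoint_of_subset_left (Finset.inter_subset_right)
      (Finset.disjoint_of_subset_right (Finset.inter_subset_right) (hgdisj f hf f' hf' hne))
  have hsum : Afin.card = ∑ f ∈ F2, (Afin ∩ g f).card := by
    conv_lhs => rw [hsplit]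
    exact Finset.card_biUnion hdisj' 
  have heven : 2 ∣ Afin.card := by
    rw [hsum]
    apply Finset.dvd_sum
    intro f hf
    rcases hAg f hf with h | h <;> simp [h]
  rw [hAcard] at heven
  omega
end

section
/- Let f : {2,...,⌊n/2⌋} → ℝ≥0 be strictly increasing, and let τ be a binary phylogenetic tree containing an inner edge whose removal yields four leaf subsets X_1, X_2 (on one side) and X_3, X_4 (on the other side) with |X_i| = x_i. If τ is an NNI-local minimum of Φ_f, then min(x_1+x_2, x_3+x_4) ≤ min(x_1+x_3, x_2+x_4) and min(x_1+x_2, x_3+x_4) ≤ min(x_1+x_4, x_2+x_3). -/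
open SimpleGraph

variable {n : ℕ} {V : Type} [Fintype V]

section Helpers

variable {V : Type}

lemma reach_trans_of_adj {H H' : SimpleGraph V}
    (h : ∀ x y, H.Adj x y → H'.Reachable x y) {x y : V} (hxy : H.Reachable x y) :
    H'.Reachable x y := by
  obtain ⟨w⟩ := hxy
  induction w with
  | nil => exact Reachable.refl _
  | cons ha _ ih => exact (h _ _ ha).trans ih

lemma reach_isolated {H : SimpleGraph V} {u x : V} (h : ∀ y, ¬ H.Adj u y)
    (hx : H.Reachable u x) : u = x := by
  obtain ⟨w⟩ := hx
  cases w with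
  | nil => rfl
  | cons ha _ => exact absurd ha (h _)

lemma mem_of_reach_closed {H : SimpleGraph V} {W : Set V}
    (hW : ∀ x ∈ W, ∀ y, H.Adj x y → y ∈ W) {x y : V} (hx : x ∈ W)
    (h : H.Reachable x y) : y ∈ W := by
  obtain ⟨w⟩ := h
  induction w with
  | nil => exact hx
  | cons ha p ih => exact ih (hW _ hx _ ha)

lemma tree_bridge {G : SimpleGraph V} (hT : G.IsTree) {u w : V} (huw : G.Adj u w) :
    ¬ (G.deleteEdges {s(u,w)}).Reachable u w := by
  have hb := (isAcyclic_iff_forall_adj_isBridge.mp hT.IsAcyclic) huw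
  exact isBridge_iff.mp hb

lemma tree_side_or {G : SimpleGraph V} (hT : G.IsTree) {u w : V} (huw : G.Adj u w) (x : V) :
    (G.deleteEdges {s(u,w)}).Reachable x u ∨ (G.deleteEdges {s(u,w)}).Reachable x w := by
  obtain ⟨p⟩ := hT.isConnected.preconnected x u
  induction p with
  | nil => exact Or.inl (Reachable.refl _)
  | @cons a c b ha q ih =>
    rcases ih huw with h | h
    · by_cases hc : s(a, c) = s(b, w)
      · rw [Sym2.eq_iff] at hc
        rcases hc with ⟨rfl, rfl⟩ | ⟨rfl, rfl⟩
        · exact Or.inl (Reachable.refl _)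
        · exact Or.inr (Reachable.refl _)
      · have hadj : (G.deleteEdges {s(b,w)}).Adj a c := by
          rw [deleteEdges_adj]; exact ⟨ha, by simpa using hc⟩
        exact Or.inl (hadj.reachable.trans h)
    · by_cases hc : s(a, c) = s(b, w)
      · rw [Sym2.eq_iff] at hc
        rcases hc with ⟨rfl, rfl⟩ | ⟨rfl, rfl⟩
        · exact Or.inl (Reachable.refl _)
        · exact Or.inr (Reachable.refl _)
      · have hadj : (G.deleteEdges {s(b,w)}).Adj a c := by
          rw [deleteEdges_adj]; exact ⟨ha, by simpa using hc⟩
        exact Or.inr (hadj.reachable.trans h)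

lemma tree_side_not_both {G : SimpleGraph V} (hT : G.IsTree) {u w : V} (huw : G.Adj u w)
    (x : V) : ¬ ((G.deleteEdges {s(u,w)}).Reachable x u ∧ (G.deleteEdges {s(u,w)}).Reachable x w) :=
  fun ⟨h1, h2⟩ => tree_bridge hT huw (h1.symm.trans h2)

lemma walk_head {H : SimpleGraph V} {u x : V} (r : H.Walk u x) (hr : r.IsPath) (hne : u ≠ x) :
    ∃ (y : V) (q : H.Walk y x), H.Adj u y ∧ u ∉ q.support := by
  cases r with
  | nil => exact absurd rfl hne
  | cons h q => exact ⟨_, q, h, ((Walk.cons_isPath_iff _ _).mp hr).2⟩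

end Helpers

section Helpers2
variable {V : Type}

lemma sym2_ne_of {a b c d : V} (h1 : ¬(a = c ∧ b = d)) (h2 : ¬(a = d ∧ b = c)) :
    s(a,b) ≠ s(c,d) := by
  rw [Ne, Sym2.eq_iff]
  rintro (h | h)
  · exact h1 h
  · exact h2 h

lemma walk_transfer_del {H : SimpleGraph V} {s : Set (Sym2 V)} {x y : V}
    (p : H.Walk x y) (h : ∀ e ∈ p.edges, e ∉ s) (hle : H ≤ G0) :
    (G0.deleteEdges s).Reachable x y := by
  refine ⟨p.transfer _ fun e he => ?_⟩
  rw [edgeSet_deleteEdges]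
  exact ⟨edgeSet_mono hle (p.edges_subset_edgeSet he), h e he⟩

/-- membership of a vertex in an edge of a walk implies membership in support -/
lemma mem_support_of_mem_edge {H : SimpleGraph V} {x y u : V} (p : H.Walk x y)
    {e : Sym2 V} (he : e ∈ p.edges) (hu : u ∈ e) : u ∈ p.support := by
  induction e with
  | _ a b =>
    rw [Sym2.mem_iff] at hu
    rcases hu with rfl | rfl
    · exact p.fst_mem_support_of_mem_edges he
    · exact p.snd_mem_support_of_mem_edges he

/-- The side of `w` across the edge `{v,w}` equals the component of `w` after deleting all
edges at `u` and `v`, provided `u ~ v ~ w` in a tree. -/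
lemma reach_nbr_iff_D {G : SimpleGraph V} (hT : G.IsTree) {u v w : V}
    (huv : G.Adj u v) (hvw : G.Adj v w) (hwu : w ≠ u) (x : V) :
    (G.deleteEdges {s(v,w)}).Reachable x w ↔
      (G.deleteEdges {e : Sym2 V | u ∈ e ∨ v ∈ e}).Reachable x w := by
  classical
  constructor
  · intro hx
    obtain ⟨p0⟩ := hx
    have hp : p0.bypass.IsPath := Walk.bypass_isPath p0
    set p := p0.bypass with hpdef
    have hvsup : v ∉ p.support := by
      intro hvs
      exact tree_bridge hT hvw ⟨p.dropUntil v hvs⟩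
    have husup : u ∉ p.support := by
      intro hus
      have hq : ∀ e ∈ (p.dropUntil u hus).edges, e ∉ ({s(u,v)} : Set (Sym2 V)) := by
        intro e heq
        have hsub : v ∉ (p.dropUntil u hus).support :=
          fun hv => hvsup (p.support_dropUntil_subset hus hv)
        intro hmem
        rw [Set.mem_singleton_iff] at hmem
        subst hmem
        exact hsub (mem_support_of_mem_edge _ heq (by simp))
      have hr : (G.deleteEdges {s(u,v)}).Reachable u w :=
        walk_transfer_del (p.dropUntil u hus) hq (deleteEdges_le _)
      have hadj : (G.deleteEdges {s(u,v)}).Adj w v := by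
        rw [deleteEdges_adj]
        refine ⟨hvw.symm, fun hm => ?_⟩
        rw [Set.mem_singleton_iff] at hm
        exact sym2_ne_of (fun h => hwu h.1) (fun h => huv.ne (h.2.symm)) hm
      exact tree_bridge hT huv (hr.trans hadj.reachable)
    have hq : ∀ e ∈ p.edges, e ∉ ({e : Sym2 V | u ∈ e ∨ v ∈ e}) := by
      intro e heq
      rintro (hm | hm)
      · exact husup (mem_support_of_mem_edge p heq hm)
      · exact hvsup (mem_support_of_mem_edge p heq hm)
    exact walk_transfer_del p hq (deleteEdges_le _)
  · intro hx
    refine reach_trans_of_adj (fun a b hab => ?_) hx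
    rw [deleteEdges_adj] at hab
    refine Adj.reachable ?_
    rw [deleteEdges_adj]
    refine ⟨hab.1, ?_⟩
    simp only [Set.mem_singleton_iff]
    intro hC
    exact hab.2 (Or.inr (hC ▸ (by simp)))

lemma side_eq_tri {G : SimpleGraph V} (hT : G.IsTree) {u v p q : V} (huv : G.Adj u v)
    (hN : G.neighborSet u = {v, p, q}) (hpv : p ≠ v) (hqv : q ≠ v) (x : V) :
    (G.deleteEdges {s(u,v)}).Reachable x u ↔
      x = u ∨ (G.deleteEdges {e : Sym2 V | u ∈ e ∨ v ∈ e}).Reachable x p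
            ∨ (G.deleteEdges {e : Sym2 V | u ∈ e ∨ v ∈ e}).Reachable x q := by
  have hadjp : G.Adj u p := by
    have : p ∈ G.neighborSet u := by rw [hN]; simp
    exact this
  have hadjq : G.Adj u q := by
    have : q ∈ G.neighborSet u := by rw [hN]; simp
    exact this
  classical
  constructor
  · intro hx
    by_cases hxu : x = u
    · exact Or.inl hxu
    obtain ⟨r0⟩ := hx.symm
    obtain ⟨y, r, hy, hur⟩ := walk_head r0.bypass r0.bypass_isPath (Ne.symm hxu)
    have hyadj : G.Adj u y := ((deleteEdges_adj).mp hy).1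
    have hyv : y ≠ v := by
      intro h; subst h
      exact ((deleteEdges_adj).mp hy).2 (by simp)
    have hymem : y ∈ ({v, p, q} : Set V) := by rw [← hN]; exact hyadj
    have hvr : v ∉ r.support := by
      intro hvs
      have : (G.deleteEdges {s(u,v)}).Reachable v x := ⟨r.dropUntil v hvs⟩
      exact tree_bridge hT huv ((this.trans hx).symm)
    have hDreach : (G.deleteEdges {e : Sym2 V | u ∈ e ∨ v ∈ e}).Reachable x y := by
      have := walk_transfer_del (G0 := G) r (fun e he => by
        intro hm
        have hm' : u ∈ e ∨ v ∈ e := hm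
        rcases hm' with hm | hm
        · exact hur (mem_support_of_mem_edge r he hm)
        · exact hvr (mem_support_of_mem_edge r he hm)) (deleteEdges_le _)
      exact this.symm
    simp only [Set.mem_insert_iff, Set.mem_singleton_iff] at hymem
    rcases hymem with rfl | rfl | rfl
    · exact absurd rfl hyv
    · exact Or.inr (Or.inl hDreach)
    · exact Or.inr (Or.inr hDreach)
  · rintro (rfl | h | h)
    · exact Reachable.refl _
    · have h1 : (G.deleteEdges {s(u,v)}).Reachable x p :=
        reach_trans_of_adj (fun a b hab => by
          rw [deleteEdges_adj] at hab
          refine Adj.reachable ?_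
          rw [deleteEdges_adj]
          exact ⟨hab.1, by
            simp only [Set.mem_singleton_iff]
            intro hC
            exact hab.2 (Or.inl (hC ▸ (by simp)))⟩) h
      have hadj : (G.deleteEdges {s(u,v)}).Adj p u := by
        rw [deleteEdges_adj]
        refine ⟨hadjp.symm, fun hm => ?_⟩
        rw [Set.mem_singleton_iff] at hm
        exact sym2_ne_of (fun h => huv.ne h.2) (fun h => hpv h.1) hm
      exact h1.trans hadj.reachable
    · have h1 : (G.deleteEdges {s(u,v)}).Reachable x q :=
        reach_trans_of_adj (fun a b hab => by
          rw [deleteEdges_adj] at hab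
          refine Adj.reachable ?_
          rw [deleteEdges_adj]
          exact ⟨hab.1, by
            simp only [Set.mem_singleton_iff]
            intro hC
            exact hab.2 (Or.inl (hC ▸ (by simp)))⟩) h
      have hadj : (G.deleteEdges {s(u,v)}).Adj q u := by
        rw [deleteEdges_adj]
        refine ⟨hadjq.symm, fun hm => ?_⟩
        rw [Set.mem_singleton_iff] at hm
        exact sym2_ne_of (fun h => huv.ne h.2) (fun h => hqv h.1) hm
      exact h1.trans hadj.reachable

end Helpers2

section Helpers3
variable {n : ℕ} {V : Type} [Fintype V]

/-- In a tree, the two sides of an edge partition the leaves, so side sizes add to `n`. -/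
lemma side_card_add (G : SimpleGraph V) (hT : G.IsTree) (leaf : Fin n → V)
    {u w : V} (huw : G.Adj u w) :
    splitSide G leaf u w + splitSide G leaf w u = n := by
  have hswap : s(w,u) = s(u,w) := Sym2.eq_swap
  have hU : {i : Fin n | (G.deleteEdges {s(u,w)}).Reachable (leaf i) u} ∪
      {i : Fin n | (G.deleteEdges {s(u,w)}).Reachable (leaf i) w} = Set.univ := by
    ext i
    simp only [Set.mem_union, Set.mem_setOf_eq, Set.mem_univ, iff_true]
    exact tree_side_or hT huw (leaf i)
  have hD : Disjoint {i : Fin n | (G.deleteEdges {s(u,w)}).Reachable (leaf i) u}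
      {i : Fin n | (G.deleteEdges {s(u,w)}).Reachable (leaf i) w} := by
    rw [Set.disjoint_left]
    intro i h1 h2
    exact tree_side_not_both hT huw (leaf i) ⟨h1, h2⟩
  have := Set.ncard_union_eq hD (Set.toFinite _) (Set.toFinite _)
  rw [hU] at this
  unfold splitSide
  rw [hswap]
  rw [← this, Set.ncard_univ, Nat.card_eq_fintype_card, Fintype.card_fin]

/-- every branch of a binary phylogenetic tree contains a leaf -/
lemma subtree_leaf_aux (G : SimpleGraph V) (hT : G.IsTree) (leaf : Fin n → V)
    (hleaf : ∀ v : V, (G.neighborSet v).ncard = 1 → ∃ i, leaf i = v)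
    (hdeg : ∀ v : V, (G.neighborSet v).ncard = 1 ∨ (G.neighborSet v).ncard = 3) :
    ∀ (k : ℕ) (u w : V), G.Adj u w →
      {x : V | (G.deleteEdges {s(u,w)}).Reachable x w}.ncard ≤ k →
      ∃ i, (G.deleteEdges {s(u,w)}).Reachable (leaf i) w := by
  intro k
  induction k with
  | zero =>
    intro u w huw hcard
    exfalso
    have : 0 < {x : V | (G.deleteEdges {s(u,w)}).Reachable x w}.ncard :=
      (Set.ncard_pos (Set.toFinite _)).mpr ⟨w, Reachable.refl _⟩
    omega
  | succ k ih =>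
    intro u w huw hcard
    by_cases hlw : (G.neighborSet w).ncard = 1
    · obtain ⟨i, hi⟩ := hleaf w hlw
      exact ⟨i, hi ▸ Reachable.refl _⟩
    · have h3 : (G.neighborSet w).ncard = 3 := (hdeg w).resolve_left hlw
      have hex : ∃ c, G.Adj w c ∧ c ≠ u := by
        by_contra hC
        push_neg at hC
        have hsub : G.neighborSet w ⊆ {u} := by
          intro c hc
          simp only [Set.mem_singleton_iff]
          exact hC c hc
        have := Set.ncard_le_ncard hsub (Set.toFinite _)
        rw [Set.ncard_singleton] at this
        omega
      obtain ⟨c, hwc, hcu⟩ := hex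
      -- the subtree at c is strictly inside the subtree at w
      have hsub : {x : V | (G.deleteEdges {s(w,c)}).Reachable x c} ⊆
          {x : V | (G.deleteEdges {s(u,w)}).Reachable x w} := by
        intro x hx
        simp only [Set.mem_setOf_eq] at hx ⊢
        have hD : (G.deleteEdges {e : Sym2 V | u ∈ e ∨ w ∈ e}).Reachable x c :=
          (reach_nbr_iff_D hT huw hwc hcu x).mp hx
        have h1 : (G.deleteEdges {s(u,w)}).Reachable x c := by
          refine reach_trans_of_adj (fun a b hab => ?_) hD
          rw [deleteEdges_adj] at hab
          refine Adj.reachable ?_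
          rw [deleteEdges_adj]
          refine ⟨hab.1, fun hm => ?_⟩
          rw [Set.mem_singleton_iff] at hm
          exact hab.2 (Or.inl (hm ▸ (by simp)))
        have hadj : (G.deleteEdges {s(u,w)}).Adj c w := by
          rw [deleteEdges_adj]
          refine ⟨hwc.symm, fun hm => ?_⟩
          rw [Set.mem_singleton_iff] at hm
          exact sym2_ne_of (fun h => hcu h.1) (fun h => hwc.ne h.1.symm) hm
        exact h1.trans hadj.reachable
      have hwmem : w ∈ {x : V | (G.deleteEdges {s(u,w)}).Reachable x w} := Reachable.refl _
      have hwnot : w ∉ {x : V | (G.deleteEdges {s(w,c)}).Reachable x c} := by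
        intro hC
        exact tree_bridge hT hwc hC
      have hlt : {x : V | (G.deleteEdges {s(w,c)}).Reachable x c}.ncard <
          {x : V | (G.deleteEdges {s(u,w)}).Reachable x w}.ncard :=
        Set.ncard_lt_ncard ⟨hsub, fun hC => hwnot (hC hwmem)⟩ (Set.toFinite _)
      obtain ⟨i, hi⟩ := ih w c hwc (by omega)
      exact ⟨i, hsub hi⟩

lemma subtree_leaf (G : SimpleGraph V) (hT : G.IsTree) (leaf : Fin n → V)
    (hleaf : ∀ v : V, (G.neighborSet v).ncard = 1 → ∃ i, leaf i = v)
    (hdeg : ∀ v : V, (G.neighborSet v).ncard = 1 ∨ (G.neighborSet v).ncard = 3)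
    {u w : V} (huw : G.Adj u w) : 1 ≤ splitSide G leaf w u := by
  obtain ⟨i, hi⟩ := subtree_leaf_aux G hT leaf hleaf hdeg
    {x : V | (G.deleteEdges {s(u,w)}).Reachable x w}.ncard u w huw le_rfl
  unfold splitSide
  rw [show s(w,u) = s(u,w) from Sym2.eq_swap]
  exact (Set.ncard_pos (Set.toFinite _)).mpr ⟨i, hi⟩

end Helpers3



lemma key_ineq {n : ℕ} {V : Type} [Fintype V]
    (T : PhyloTree n V) (hbin : IsBinary T)
    (f : ℕ → ℝ)
    (hf : ∀ a b, 2 ≤ a → a < b → b ≤ n / 2 → f a < f b)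
    (hmin : ∀ T' : PhyloTree n V, NNIMove T T' → Phi T f ≤ Phi T' f)
    (u v a1 a2 b1 b2 : V)
    (huv : T.G.Adj u v) (hu : ¬ IsLeaf T u) (hv : ¬ IsLeaf T v)
    (ha1 : T.G.Adj u a1) (ha2 : T.G.Adj u a2) (ha : a1 ≠ a2)
    (ha1v : a1 ≠ v) (ha2v : a2 ≠ v)
    (hb1 : T.G.Adj v b1) (hb2 : T.G.Adj v b2) (hb : b1 ≠ b2)
    (hb1u : b1 ≠ u) (hb2u : b2 ≠ u) :
    min (splitSide T.G T.leaf a1 u + splitSide T.G T.leaf a2 u)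
        (splitSide T.G T.leaf b1 v + splitSide T.G T.leaf b2 v) ≤
      min (splitSide T.G T.leaf a1 u + splitSide T.G T.leaf b1 v)
        (splitSide T.G T.leaf a2 u + splitSide T.G T.leaf b2 v) := by
  classical
  by_contra hcon
  push_neg at hcon
  set Gr := T.G with hGrdef
  have hT : Gr.IsTree := T.isTree
  have hbin' : ∀ w : V, (Gr.neighborSet w).ncard = 1 ∨ (Gr.neighborSet w).ncard = 3 := hbin
  -- vertices adjacent across the edge on opposite sides are distinct
  have hab_ne : ∀ a b : V, Gr.Adj u a → Gr.Adj v b → a ≠ v → b ≠ u → a ≠ b := by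
    intro a b hua hvb hav hbu hEq
    subst hEq
    have h1 : (Gr.deleteEdges {s(u,v)}).Adj u a := by
      rw [deleteEdges_adj]
      refine ⟨hua, fun hm => ?_⟩
      rw [Set.mem_singleton_iff] at hm
      exact sym2_ne_of (fun h => hav h.2) (fun h => huv.ne h.1) hm
    have h2 : (Gr.deleteEdges {s(u,v)}).Adj a v := by
      rw [deleteEdges_adj]
      refine ⟨hvb.symm, fun hm => ?_⟩
      rw [Set.mem_singleton_iff] at hm
      exact sym2_ne_of (fun h => hbu h.1) (fun h => huv.ne h.2.symm) hm
    exact tree_bridge hT huv (h1.reachable.trans h2.reachable)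
  have ha1b1 : a1 ≠ b1 := hab_ne a1 b1 ha1 hb1 ha1v hb1u
  have ha1b2 : a1 ≠ b2 := hab_ne a1 b2 ha1 hb2 ha1v hb2u
  have ha2b1 : a2 ≠ b1 := hab_ne a2 b1 ha2 hb1 ha2v hb1u
  have ha2b2 : a2 ≠ b2 := hab_ne a2 b2 ha2 hb2 ha2v hb2u
  -- non-adjacencies (no triangles in a tree)
  have hnadj : ∀ a : V, Gr.Adj u a → a ≠ v → ¬ Gr.Adj v a := by
    intro a hua hav hC
    have h1 : (Gr.deleteEdges {s(u,v)}).Adj u a := by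
      rw [deleteEdges_adj]
      refine ⟨hua, fun hm => ?_⟩
      rw [Set.mem_singleton_iff] at hm
      exact sym2_ne_of (fun h => hav h.2) (fun h => huv.ne h.1) hm
    have h2 : (Gr.deleteEdges {s(u,v)}).Adj a v := by
      rw [deleteEdges_adj]
      refine ⟨hC.symm, fun hm => ?_⟩
      rw [Set.mem_singleton_iff] at hm
      exact sym2_ne_of (fun h => hua.ne h.1.symm) (fun h => huv.ne h.2.symm) hm
    exact tree_bridge hT huv (h1.reachable.trans h2.reachable)
  have hnadj_b : ∀ b : V, Gr.Adj v b → b ≠ u → ¬ Gr.Adj u b := by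
    intro b hvb hbu hC
    have h1 : (Gr.deleteEdges {s(u,v)}).Adj v b := by
      rw [deleteEdges_adj]
      refine ⟨hvb, fun hm => ?_⟩
      rw [Set.mem_singleton_iff] at hm
      exact sym2_ne_of (fun h => huv.ne h.1.symm) (fun h => hbu h.2) hm
    have h2 : (Gr.deleteEdges {s(u,v)}).Adj b u := by
      rw [deleteEdges_adj]
      refine ⟨hC.symm, fun hm => ?_⟩
      rw [Set.mem_singleton_iff] at hm
      exact sym2_ne_of (fun h => hbu h.1) (fun h => hvb.ne h.1.symm) hm
    exact tree_bridge hT huv ((h1.reachable.trans h2.reachable).symm)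
  have hva2 : ¬ Gr.Adj v a2 := hnadj a2 ha2 ha2v
  have hub1 : ¬ Gr.Adj u b1 := hnadj_b b1 hb1 hb1u
  -- neighbor sets
  have hNu : Gr.neighborSet u = {v, a1, a2} := by
    have hsub : ({v, a1, a2} : Set V) ⊆ Gr.neighborSet u := by
      intro y hy
      simp only [Set.mem_insert_iff, Set.mem_singleton_iff] at hy
      rcases hy with rfl | rfl | rfl
      · exact huv
      · exact ha1
      · exact ha2
    have hcard3 : ({v, a1, a2} : Set V).ncard = 3 :=
      Set.ncard_eq_three.mpr ⟨v, a1, a2, Ne.symm ha1v, Ne.symm ha2v, ha, rfl⟩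
    have hle : 3 ≤ (Gr.neighborSet u).ncard := by
      rw [← hcard3]; exact Set.ncard_le_ncard hsub (Set.toFinite _)
    have h3 : (Gr.neighborSet u).ncard = 3 := by
      rcases hbin' u with h | h
      · omega
      · exact h
    exact (Set.eq_of_subset_of_ncard_le hsub (by omega) (Set.toFinite _)).symm
  have hNv : Gr.neighborSet v = {u, b1, b2} := by
    have hsub : ({u, b1, b2} : Set V) ⊆ Gr.neighborSet v := by
      intro y hy
      simp only [Set.mem_insert_iff, Set.mem_singleton_iff] at hy
      rcases hy with rfl | rfl | rfl
      · exact huv.symm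
      · exact hb1
      · exact hb2
    have hcard3 : ({u, b1, b2} : Set V).ncard = 3 :=
      Set.ncard_eq_three.mpr ⟨u, b1, b2, Ne.symm hb1u, Ne.symm hb2u, hb, rfl⟩
    have hle : 3 ≤ (Gr.neighborSet v).ncard := by
      rw [← hcard3]; exact Set.ncard_le_ncard hsub (Set.toFinite _)
    have h3 : (Gr.neighborSet v).ncard = 3 := by
      rcases hbin' v with h | h
      · omega
      · exact h
    exact (Set.eq_of_subset_of_ncard_le hsub (by omega) (Set.toFinite _)).symm
  -- edge (in)equalities
  have hn1E : s(u,b1) ∉ Gr.edgeSet := fun h => hub1 h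
  have hn2E : s(v,a2) ∉ Gr.edgeSet := fun h => hva2 h
  have he0d1 : s(u,v) ≠ s(u,a2) := sym2_ne_of (fun h => ha2v h.2.symm) (fun h => ha2.ne h.1)
  have he0d2 : s(u,v) ≠ s(v,b1) := sym2_ne_of (fun h => huv.ne h.1) (fun h => hb1u h.1.symm)
  have he0n1 : s(u,v) ≠ s(u,b1) := sym2_ne_of (fun h => hb1.ne h.2) (fun h => hb1u h.1.symm)
  have he0n2 : s(u,v) ≠ s(v,a2) := sym2_ne_of (fun h => huv.ne h.1) (fun h => ha2.ne h.1)
  have hd1d2 : s(u,a2) ≠ s(v,b1) := sym2_ne_of (fun h => huv.ne h.1) (fun h => hb1u h.1.symm)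
  have hd1n1 : s(u,a2) ≠ s(u,b1) := sym2_ne_of (fun h => ha2b1 h.2) (fun h => hb1u h.1.symm)
  have hd1n2 : s(u,a2) ≠ s(v,a2) := sym2_ne_of (fun h => huv.ne h.1) (fun h => ha2.ne h.1)
  have hd2n1 : s(v,b1) ≠ s(u,b1) := sym2_ne_of (fun h => huv.ne h.1.symm) (fun h => hb1.ne h.1)
  have hd2n2 : s(v,b1) ≠ s(v,a2) := sym2_ne_of (fun h => ha2b1 h.2.symm) (fun h => ha2v h.1.symm)
  have hn1n2 : s(u,b1) ≠ s(v,a2) := sym2_ne_of (fun h => huv.ne h.1) (fun h => ha2.ne h.1)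
  -- the NNI-rewired graph
  set G2 : SimpleGraph V :=
    Gr.deleteEdges {s(u,a2), s(v,b1)} ⊔ fromEdgeSet {s(u,b1), s(v,a2)} with hG2def
  have hG2adj : ∀ x y : V, G2.Adj x y ↔
      ((Gr.Adj x y ∧ s(x,y) ≠ s(u,a2) ∧ s(x,y) ≠ s(v,b1)) ∨
        (s(x,y) = s(u,b1) ∨ s(x,y) = s(v,a2))) := by
    intro x y
    rw [hG2def]
    simp only [sup_adj, deleteEdges_adj, fromEdgeSet_adj, Set.mem_insert_iff,
      Set.mem_singleton_iff, not_or]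
    constructor
    · rintro (⟨h, h1, h2⟩ | ⟨h, _⟩)
      · exact Or.inl ⟨h, h1, h2⟩
      · exact Or.inr h
    · rintro (⟨h, h1, h2⟩ | h)
      · exact Or.inl ⟨h, h1, h2⟩
      · refine Or.inr ⟨h, ?_⟩
        rcases h with h | h
        · rcases Sym2.eq_iff.mp h with ⟨rfl, rfl⟩ | ⟨rfl, rfl⟩
          · exact Ne.symm hb1u
          · exact hb1u
        · rcases Sym2.eq_iff.mp h with ⟨rfl, rfl⟩ | ⟨rfl, rfl⟩
          · exact Ne.symm ha2v
          · exact ha2v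
  have hE2 : G2.edgeSet = (Gr.edgeSet \ {s(u, a2), s(v, b1)}) ∪ {s(u, b1), s(v, a2)} := by
    rw [hG2def, edgeSet_sup, edgeSet_deleteEdges, edgeSet_fromEdgeSet]
    congr 1
    ext e
    simp only [Set.mem_diff, Set.mem_insert_iff, Set.mem_singleton_iff, Set.mem_setOf_eq,
      and_iff_left_iff_imp]
    rintro (rfl | rfl)
    · exact fun h => hb1u (Sym2.mk_isDiag_iff.mp h).symm
    · exact fun h => ha2v (Sym2.mk_isDiag_iff.mp h).symm
  -- adjacencies in G2
  have hA_uv : G2.Adj u v := (hG2adj u v).mpr (Or.inl ⟨huv, he0d1, he0d2⟩)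
  have hA_ua1 : G2.Adj u a1 := by
    refine (hG2adj u a1).mpr (Or.inl ⟨ha1, ?_, ?_⟩)
    · exact sym2_ne_of (fun h => ha h.2) (fun h => ha2.ne h.1)
    · exact sym2_ne_of (fun h => huv.ne h.1) (fun h => hb1u h.1.symm)
  have hA_ub1 : G2.Adj u b1 := (hG2adj u b1).mpr (Or.inr (Or.inl rfl))
  have hA_va2 : G2.Adj v a2 := (hG2adj v a2).mpr (Or.inr (Or.inr rfl))
  have hA_vb2 : G2.Adj v b2 := by
    refine (hG2adj v b2).mpr (Or.inl ⟨hb2, ?_, ?_⟩)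
    · exact sym2_ne_of (fun h => huv.ne h.1.symm) (fun h => ha2v h.1.symm)
    · exact sym2_ne_of (fun h => hb h.2.symm) (fun h => hb1.ne h.1)
  -- neighbor sets in G2
  have hNu2 : G2.neighborSet u = {v, a1, b1} := by
    ext y
    simp only [mem_neighborSet, Set.mem_insert_iff, Set.mem_singleton_iff]
    constructor
    · intro hy
      rcases (hG2adj u y).mp hy with ⟨h, h1, _⟩ | h | h
      · have hmem : y ∈ Gr.neighborSet u := h
        rw [hNu] at hmem
        simp only [Set.mem_insert_iff, Set.mem_singleton_iff] at hmem
        rcases hmem with rfl | rfl | rfl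
        · exact Or.inl rfl
        · exact Or.inr (Or.inl rfl)
        · exact absurd rfl h1
      · rcases Sym2.eq_iff.mp h with ⟨_, rfl⟩ | ⟨h1, _⟩
        · exact Or.inr (Or.inr rfl)
        · exact absurd h1.symm hb1u
      · rcases Sym2.eq_iff.mp h with ⟨h1, _⟩ | ⟨h1, _⟩
        · exact absurd h1 huv.ne
        · exact absurd h1.symm ha2.ne'
    · rintro (rfl | rfl | rfl)
      · exact hA_uv
      · exact hA_ua1
      · exact hA_ub1
  have hNv2 : G2.neighborSet v = {u, a2, b2} := by
    ext y
    simp only [mem_neighborSet, Set.mem_insert_iff, Set.mem_singleton_iff]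
    constructor
    · intro hy
      rcases (hG2adj v y).mp hy with ⟨h, _, h2⟩ | h | h
      · have hmem : y ∈ Gr.neighborSet v := h
        rw [hNv] at hmem
        simp only [Set.mem_insert_iff, Set.mem_singleton_iff] at hmem
        rcases hmem with rfl | rfl | rfl
        · exact Or.inl rfl
        · exact absurd rfl h2
        · exact Or.inr (Or.inr rfl)
      · rcases Sym2.eq_iff.mp h with ⟨h1, _⟩ | ⟨h1, _⟩
        · exact absurd h1 huv.ne'
        · exact absurd h1 hb1.ne
      · rcases Sym2.eq_iff.mp h with ⟨_, rfl⟩ | ⟨h1, _⟩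
        · exact Or.inr (Or.inl rfl)
        · exact absurd h1.symm ha2v
    · rintro (rfl | rfl | rfl)
      · exact hA_uv.symm
      · exact hA_va2
      · exact hA_vb2
  -- the "far" graph D with all edges at u and v removed
  have hDsetcomm : {e : Sym2 V | v ∈ e ∨ u ∈ e} = {e : Sym2 V | u ∈ e ∨ v ∈ e} := by
    ext e; exact or_comm
  have hD2D : G2.deleteEdges {e : Sym2 V | u ∈ e ∨ v ∈ e}
      = (Gr.deleteEdges {e : Sym2 V | u ∈ e ∨ v ∈ e}) := by
    ext x y
    simp only [deleteEdges_adj, Set.mem_setOf_eq, not_or]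
    constructor
    · rintro ⟨hxy, hus, hvs⟩
      refine ⟨?_, hus, hvs⟩
      rcases (hG2adj x y).mp hxy with ⟨h, _, _⟩ | h | h
      · exact h
      · exact absurd (h ▸ (by simp : u ∈ s(u,b1))) hus
      · exact absurd (h ▸ (by simp : v ∈ s(v,a2))) hvs
    · rintro ⟨hxy, hus, hvs⟩
      refine ⟨(hG2adj x y).mpr (Or.inl ⟨hxy, ?_, ?_⟩), hus, hvs⟩
      · exact fun h => hus (h ▸ (by simp : u ∈ s(u,a2)))
      · exact fun h => hvs (h ▸ (by simp : v ∈ s(v,b1)))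
  have hDle : ∀ (eD : Sym2 V), (u ∈ eD ∨ v ∈ eD) → ∀ x y : V,
      (Gr.deleteEdges {e : Sym2 V | u ∈ e ∨ v ∈ e}).Adj x y → (Gr.deleteEdges {eD}).Adj x y := by
    intro eD heD x y hxy
    rw [deleteEdges_adj] at hxy ⊢
    refine ⟨hxy.1, fun hm => ?_⟩
    rw [Set.mem_singleton_iff] at hm
    exact hxy.2 (show s(x,y) ∈ {e : Sym2 V | u ∈ e ∨ v ∈ e} from hm ▸ heD)
  have hDlift : ∀ (eD : Sym2 V), (u ∈ eD ∨ v ∈ eD) → ∀ x y : V,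
      (Gr.deleteEdges {e : Sym2 V | u ∈ e ∨ v ∈ e}).Reachable x y → (Gr.deleteEdges {eD}).Reachable x y := by
    intro eD heD x y h
    exact reach_trans_of_adj (fun p q hpq => (hDle eD heD p q hpq).reachable) h
  have hDiso_u : ∀ x : V, (Gr.deleteEdges {e : Sym2 V | u ∈ e ∨ v ∈ e}).Reachable u x → u = x := by
    intro x
    refine reach_isolated (fun y hy => ?_)
    rw [deleteEdges_adj] at hy
    exact hy.2 (Or.inl (by simp))
  have hDiso_v : ∀ x : V, (Gr.deleteEdges {e : Sym2 V | u ∈ e ∨ v ∈ e}).Reachable v x → v = x := by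
    intro x
    refine reach_isolated (fun y hy => ?_)
    rw [deleteEdges_adj] at hy
    exact hy.2 (Or.inr (by simp))
  -- disjointness of the four branches
  have hsameU : ∀ a a' : V, Gr.Adj u a → Gr.Adj u a' → a ≠ a' → ∀ x : V,
      (Gr.deleteEdges {e : Sym2 V | u ∈ e ∨ v ∈ e}).Reachable x a → (Gr.deleteEdges {e : Sym2 V | u ∈ e ∨ v ∈ e}).Reachable x a' → False := by
    intro a a' hua hua' haa x h1 h2
    have hr : (Gr.deleteEdges {s(u,a)}).Reachable a a' :=
      hDlift s(u,a) (Or.inl (by simp)) a a' (h1.symm.trans h2)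
    have hadj : (Gr.deleteEdges {s(u,a)}).Adj a' u := by
      rw [deleteEdges_adj]
      refine ⟨hua'.symm, fun hm => ?_⟩
      rw [Set.mem_singleton_iff] at hm
      exact sym2_ne_of (fun h => hua'.ne h.1.symm) (fun h => haa h.1.symm) hm
    exact tree_bridge hT hua ((hr.trans hadj.reachable).symm)
  have hsameV : ∀ b b' : V, Gr.Adj v b → Gr.Adj v b' → b ≠ b' → ∀ x : V,
      (Gr.deleteEdges {e : Sym2 V | u ∈ e ∨ v ∈ e}).Reachable x b → (Gr.deleteEdges {e : Sym2 V | u ∈ e ∨ v ∈ e}).Reachable x b' → False := by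
    intro b b' hvb hvb' hbb x h1 h2
    have hr : (Gr.deleteEdges {s(v,b)}).Reachable b b' :=
      hDlift s(v,b) (Or.inr (by simp)) b b' (h1.symm.trans h2)
    have hadj : (Gr.deleteEdges {s(v,b)}).Adj b' v := by
      rw [deleteEdges_adj]
      refine ⟨hvb'.symm, fun hm => ?_⟩
      rw [Set.mem_singleton_iff] at hm
      exact sym2_ne_of (fun h => hvb'.ne h.1.symm) (fun h => hbb h.1.symm) hm
    exact tree_bridge hT hvb ((hr.trans hadj.reachable).symm)
  have hAB : ∀ a b : V, Gr.Adj u a → Gr.Adj v b → a ≠ v → b ≠ u → ∀ x : V,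
      (Gr.deleteEdges {e : Sym2 V | u ∈ e ∨ v ∈ e}).Reachable x a → (Gr.deleteEdges {e : Sym2 V | u ∈ e ∨ v ∈ e}).Reachable x b → False := by
    intro a b hua hvb hav hbu x h1 h2
    have hr : (Gr.deleteEdges {s(u,v)}).Reachable a b :=
      hDlift s(u,v) (Or.inl (by simp)) a b (h1.symm.trans h2)
    have hadj1 : (Gr.deleteEdges {s(u,v)}).Adj u a := by
      rw [deleteEdges_adj]
      refine ⟨hua, fun hm => ?_⟩
      rw [Set.mem_singleton_iff] at hm
      exact sym2_ne_of (fun h => hav h.2) (fun h => huv.ne h.1) hm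
    have hadj2 : (Gr.deleteEdges {s(u,v)}).Adj b v := by
      rw [deleteEdges_adj]
      refine ⟨hvb.symm, fun hm => ?_⟩
      rw [Set.mem_singleton_iff] at hm
      exact sym2_ne_of (fun h => hbu h.1) (fun h => huv.ne h.2.symm) hm
    exact tree_bridge hT huv ((hadj1.reachable.trans hr).trans hadj2.reachable)
  -- neighbor sets / degrees elsewhere
  have hN_other : ∀ w : V, w ≠ u → w ≠ v → w ≠ a2 → w ≠ b1 →
      G2.neighborSet w = Gr.neighborSet w := by
    intro w hwu hwv hwa hwb
    ext y
    simp only [mem_neighborSet]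
    constructor
    · intro hy
      rcases (hG2adj w y).mp hy with ⟨h, _, _⟩ | h | h
      · exact h
      · rcases Sym2.eq_iff.mp h with ⟨h1, _⟩ | ⟨h1, _⟩
        · exact absurd h1 hwu
        · exact absurd h1 hwb
      · rcases Sym2.eq_iff.mp h with ⟨h1, _⟩ | ⟨h1, _⟩
        · exact absurd h1 hwv
        · exact absurd h1 hwa
    · intro hy
      refine (hG2adj w y).mpr (Or.inl ⟨hy, ?_, ?_⟩)
      · exact sym2_ne_of (fun h => hwu h.1) (fun h => hwa h.1)
      · exact sym2_ne_of (fun h => hwv h.1) (fun h => hwb h.1)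
  have hNa2set : G2.neighborSet a2 = insert v (Gr.neighborSet a2 \ {u}) := by
    ext y
    simp only [mem_neighborSet, Set.mem_insert_iff, Set.mem_diff, Set.mem_singleton_iff]
    constructor
    · intro hy
      rcases (hG2adj a2 y).mp hy with ⟨h, h1, _⟩ | h | h
      · refine Or.inr ⟨h, fun hyu => h1 ?_⟩
        subst hyu
        exact Sym2.eq_swap
      · rcases Sym2.eq_iff.mp h with ⟨h1, _⟩ | ⟨h1, _⟩
        · exact absurd h1 ha2.ne'
        · exact absurd h1 ha2b1
      · rcases Sym2.eq_iff.mp h with ⟨h1, _⟩ | ⟨_, h2⟩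
        · exact absurd h1 ha2v
        · exact Or.inl h2
    · rintro (rfl | ⟨h, hyu⟩)
      · exact hA_va2.symm
      · refine (hG2adj a2 y).mpr (Or.inl ⟨h, ?_, ?_⟩)
        · exact sym2_ne_of (fun hh => ha2.ne hh.1.symm) (fun hh => hyu hh.2)
        · exact sym2_ne_of (fun hh => ha2v hh.1) (fun hh => ha2b1 hh.1)
  have hNb1set : G2.neighborSet b1 = insert u (Gr.neighborSet b1 \ {v}) := by
    ext y
    simp only [mem_neighborSet, Set.mem_insert_iff, Set.mem_diff, Set.mem_singleton_iff]
    constructor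
    · intro hy
      rcases (hG2adj b1 y).mp hy with ⟨h, _, h2⟩ | h | h
      · refine Or.inr ⟨h, fun hyv => h2 ?_⟩
        subst hyv
        exact Sym2.eq_swap
      · rcases Sym2.eq_iff.mp h with ⟨h1, _⟩ | ⟨_, h2⟩
        · exact absurd h1 hb1u
        · exact Or.inl h2
      · rcases Sym2.eq_iff.mp h with ⟨h1, _⟩ | ⟨h1, _⟩
        · exact absurd h1 hb1.ne'
        · exact absurd h1.symm ha2b1
    · rintro (rfl | ⟨h, hyv⟩)
      · exact hA_ub1.symm
      · refine (hG2adj b1 y).mpr (Or.inl ⟨h, ?_, ?_⟩)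
        · exact sym2_ne_of (fun hh => hb1u hh.1) (fun hh => ha2b1 hh.1.symm)
        · exact sym2_ne_of (fun hh => hb1.ne hh.1.symm) (fun hh => hyv hh.2)
  have hdeg2 : ∀ w : V, (G2.neighborSet w).ncard = (Gr.neighborSet w).ncard := by
    intro w
    by_cases hwu : w = u
    · rw [hwu, hNu2, hNu,
        Set.ncard_eq_three.mpr ⟨v, a1, b1, Ne.symm ha1v, hb1.ne, ha1b1, rfl⟩,
        Set.ncard_eq_three.mpr ⟨v, a1, a2, Ne.symm ha1v, Ne.symm ha2v, ha, rfl⟩]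
    · by_cases hwv : w = v
      · rw [hwv, hNv2, hNv,
          Set.ncard_eq_three.mpr ⟨u, a2, b2, ha2.ne, Ne.symm hb2u, ha2b2, rfl⟩,
          Set.ncard_eq_three.mpr ⟨u, b1, b2, Ne.symm hb1u, Ne.symm hb2u, hb, rfl⟩]
      · by_cases hwa : w = a2
        · rw [hwa, hNa2set]
          have hvnot : v ∉ Gr.neighborSet a2 \ {u} := fun hC => hva2 hC.1.symm
          have humem : u ∈ Gr.neighborSet a2 := ha2.symm
          rw [Set.ncard_insert_of_notMem hvnot (Set.toFinite _)]
          exact Set.ncard_diff_singleton_add_one humem (Set.toFinite _)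
        · by_cases hwb : w = b1
          · rw [hwb, hNb1set]
            have hunot : u ∉ Gr.neighborSet b1 \ {v} := fun hC => hub1 hC.1.symm
            have hvmem : v ∈ Gr.neighborSet b1 := hb1.symm
            rw [Set.ncard_insert_of_notMem hunot (Set.toFinite _)]
            exact Set.ncard_diff_singleton_add_one hvmem (Set.toFinite _)
          · rw [hN_other w hwu hwv hwa hwb]
  -- the middle edge is a bridge in G2
  have hBridge_e0 : ¬ (G2.deleteEdges {s(u,v)}).Reachable u v := by
    intro hC
    have hW : ∀ x ∈ {z : V | z = u ∨ (Gr.deleteEdges {e : Sym2 V | u ∈ e ∨ v ∈ e}).Reachable z a1 ∨ (Gr.deleteEdges {e : Sym2 V | u ∈ e ∨ v ∈ e}).Reachable z b1},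
        ∀ y : V, (G2.deleteEdges {s(u,v)}).Adj x y →
        y ∈ {z : V | z = u ∨ (Gr.deleteEdges {e : Sym2 V | u ∈ e ∨ v ∈ e}).Reachable z a1 ∨ (Gr.deleteEdges {e : Sym2 V | u ∈ e ∨ v ∈ e}).Reachable z b1} := by
      intro x hx y hxy
      rw [deleteEdges_adj, Set.mem_singleton_iff] at hxy
      obtain ⟨hxy1, hxy2⟩ := hxy
      simp only [Set.mem_setOf_eq] at hx ⊢
      rcases hx with rfl | hx | hx
      · have hmem : y ∈ G2.neighborSet x := hxy1
        rw [hNu2] at hmem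
        simp only [Set.mem_insert_iff, Set.mem_singleton_iff] at hmem
        rcases hmem with rfl | rfl | rfl
        · exact absurd rfl hxy2
        · exact Or.inr (Or.inl (Reachable.refl _))
        · exact Or.inr (Or.inr (Reachable.refl _))
      · by_cases hus : u ∈ s(x,y)
        · rw [Sym2.mem_iff] at hus
          rcases hus with h | h
          · exact absurd (hDiso_u a1 (by rw [← h] at hx; exact hx)) ha1.ne
          · exact Or.inl h.symm
        · by_cases hvs : v ∈ s(x,y)
          · rw [Sym2.mem_iff] at hvs
            rcases hvs with h | h
            · exact absurd (hDiso_v a1 (by rw [← h] at hx; exact hx)).symm ha1v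
            · exfalso
              have hmem : x ∈ G2.neighborSet v := by
                rw [← h] at hxy1
                exact hxy1.symm
              rw [hNv2] at hmem
              simp only [Set.mem_insert_iff, Set.mem_singleton_iff] at hmem
              rcases hmem with h' | h' | h'
              · exact ha1.ne (hDiso_u a1 (by rw [h'] at hx; exact hx))
              · exact hsameU a1 a2 ha1 ha2 ha x hx (by rw [h'])
              · exact hAB a1 b2 ha1 hb2 ha1v hb2u x hx (by rw [h'])
          · have hDadj : (Gr.deleteEdges {e : Sym2 V | u ∈ e ∨ v ∈ e}).Adj x y := by
              rw [deleteEdges_adj]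
              exact ⟨(by
                rcases (hG2adj x y).mp hxy1 with ⟨h, _, _⟩ | h | h
                · exact h
                · exact absurd (h ▸ (by simp : u ∈ s(u,b1))) hus
                · exact absurd (h ▸ (by simp : v ∈ s(v,a2))) hvs), fun hm => hm.elim hus hvs⟩
            exact Or.inr (Or.inl (hDadj.symm.reachable.trans hx))
      · by_cases hus : u ∈ s(x,y)
        · rw [Sym2.mem_iff] at hus
          rcases hus with h | h
          · exact absurd (hDiso_u b1 (by rw [← h] at hx; exact hx)).symm hb1u
          · exact Or.inl h.symm
        · by_cases hvs : v ∈ s(x,y)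
          · rw [Sym2.mem_iff] at hvs
            rcases hvs with h | h
            · exact absurd (hDiso_v b1 (by rw [← h] at hx; exact hx)) hb1.ne
            · exfalso
              have hmem : x ∈ G2.neighborSet v := by
                rw [← h] at hxy1
                exact hxy1.symm
              rw [hNv2] at hmem
              simp only [Set.mem_insert_iff, Set.mem_singleton_iff] at hmem
              rcases hmem with h' | h' | h'
              · exact hb1u (hDiso_u b1 (by rw [h'] at hx; exact hx)).symm
              · exact hAB a2 b1 ha2 hb1 ha2v hb1u x (by rw [h']) hx
              · exact hsameV b1 b2 hb1 hb2 hb x hx (by rw [h'])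
          · have hDadj : (Gr.deleteEdges {e : Sym2 V | u ∈ e ∨ v ∈ e}).Adj x y := by
              rw [deleteEdges_adj]
              exact ⟨(by
                rcases (hG2adj x y).mp hxy1 with ⟨h, _, _⟩ | h | h
                · exact h
                · exact absurd (h ▸ (by simp : u ∈ s(u,b1))) hus
                · exact absurd (h ▸ (by simp : v ∈ s(v,a2))) hvs), fun hm => hm.elim hus hvs⟩
            exact Or.inr (Or.inr (hDadj.symm.reachable.trans hx))
    have hvW := mem_of_reach_closed hW (Or.inl rfl : u ∈ {z : V | z = u ∨
      (Gr.deleteEdges {e : Sym2 V | u ∈ e ∨ v ∈ e}).Reachable z a1 ∨ (Gr.deleteEdges {e : Sym2 V | u ∈ e ∨ v ∈ e}).Reachable z b1}) hC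
    simp only [Set.mem_setOf_eq] at hvW
    rcases hvW with h | h | h
    · exact huv.ne h.symm
    · exact ha1v (hDiso_v a1 h).symm
    · exact hb1.ne (hDiso_v b1 h)
  have hBridge_n1 : ¬ (G2.deleteEdges {s(u,b1)}).Reachable u b1 := by
    intro hC
    have hW : ∀ x ∈ {z : V | (Gr.deleteEdges {e : Sym2 V | u ∈ e ∨ v ∈ e}).Reachable z b1},
        ∀ y : V, (G2.deleteEdges {s(u,b1)}).Adj x y → y ∈ {z : V | (Gr.deleteEdges {e : Sym2 V | u ∈ e ∨ v ∈ e}).Reachable z b1} := by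
      intro x hx y hxy
      rw [deleteEdges_adj, Set.mem_singleton_iff] at hxy
      obtain ⟨hxy1, hxy2⟩ := hxy
      simp only [Set.mem_setOf_eq] at hx ⊢
      by_cases hus : u ∈ s(x,y)
      · rw [Sym2.mem_iff] at hus
        rcases hus with h | h
        · exact absurd (hDiso_u b1 (by rw [← h] at hx; exact hx)).symm hb1u
        · exfalso
          have hmem : x ∈ G2.neighborSet u := by
            rw [← h] at hxy1
            exact hxy1.symm
          rw [hNu2] at hmem
          simp only [Set.mem_insert_iff, Set.mem_singleton_iff] at hmem
          rcases hmem with h' | h' | h'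
          · exact hb1.ne (hDiso_v b1 (by rw [h'] at hx; exact hx))
          · exact hAB a1 b1 ha1 hb1 ha1v hb1u x (by rw [h']) hx
          · exact hxy2 (by rw [h', ← h]; exact Sym2.eq_swap)
      · by_cases hvs : v ∈ s(x,y)
        · rw [Sym2.mem_iff] at hvs
          rcases hvs with h | h
          · exact absurd (hDiso_v b1 (by rw [← h] at hx; exact hx)) hb1.ne
          · exfalso
            have hmem : x ∈ G2.neighborSet v := by
              rw [← h] at hxy1
              exact hxy1.symm
            rw [hNv2] at hmem
            simp only [Set.mem_insert_iff, Set.mem_singleton_iff] at hmem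
            rcases hmem with h' | h' | h'
            · exact hb1u (hDiso_u b1 (by rw [h'] at hx; exact hx)).symm
            · exact hAB a2 b1 ha2 hb1 ha2v hb1u x (by rw [h']) hx
            · exact hsameV b1 b2 hb1 hb2 hb x hx (by rw [h'])
        · have hDadj : (Gr.deleteEdges {e : Sym2 V | u ∈ e ∨ v ∈ e}).Adj x y := by
            rw [deleteEdges_adj]
            exact ⟨(by
              rcases (hG2adj x y).mp hxy1 with ⟨h, _, _⟩ | h | h
              · exact h
              · exact absurd (h ▸ (by simp : u ∈ s(u,b1))) hus
              · exact absurd (h ▸ (by simp : v ∈ s(v,a2))) hvs), fun hm => hm.elim hus hvs⟩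
          exact hDadj.symm.reachable.trans hx
    have huW := mem_of_reach_closed hW (Reachable.refl b1 :
        b1 ∈ {z : V | (Gr.deleteEdges {e : Sym2 V | u ∈ e ∨ v ∈ e}).Reachable z b1}) hC.symm
    simp only [Set.mem_setOf_eq] at huW
    exact hb1u (hDiso_u b1 huW).symm
  have hBridge_n2 : ¬ (G2.deleteEdges {s(v,a2)}).Reachable v a2 := by
    intro hC
    have hW : ∀ x ∈ {z : V | (Gr.deleteEdges {e : Sym2 V | u ∈ e ∨ v ∈ e}).Reachable z a2},
        ∀ y : V, (G2.deleteEdges {s(v,a2)}).Adj x y → y ∈ {z : V | (Gr.deleteEdges {e : Sym2 V | u ∈ e ∨ v ∈ e}).Reachable z a2} := by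
      intro x hx y hxy
      rw [deleteEdges_adj, Set.mem_singleton_iff] at hxy
      obtain ⟨hxy1, hxy2⟩ := hxy
      simp only [Set.mem_setOf_eq] at hx ⊢
      by_cases hus : u ∈ s(x,y)
      · rw [Sym2.mem_iff] at hus
        rcases hus with h | h
        · exact absurd (hDiso_u a2 (by rw [← h] at hx; exact hx)) ha2.ne
        · exfalso
          have hmem : x ∈ G2.neighborSet u := by
            rw [← h] at hxy1
            exact hxy1.symm
          rw [hNu2] at hmem
          simp only [Set.mem_insert_iff, Set.mem_singleton_iff] at hmem
          rcases hmem with h' | h' | h'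
          · exact ha2v (hDiso_v a2 (by rw [h'] at hx; exact hx)).symm
          · exact hsameU a1 a2 ha1 ha2 ha x (by rw [h']) hx
          · exact hAB a2 b1 ha2 hb1 ha2v hb1u x hx (by rw [h'])
      · by_cases hvs : v ∈ s(x,y)
        · rw [Sym2.mem_iff] at hvs
          rcases hvs with h | h
          · exact absurd (hDiso_v a2 (by rw [← h] at hx; exact hx)).symm ha2v
          · exfalso
            have hmem : x ∈ G2.neighborSet v := by
              rw [← h] at hxy1
              exact hxy1.symm
            rw [hNv2] at hmem
            simp only [Set.mem_insert_iff, Set.mem_singleton_iff] at hmem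
            rcases hmem with h' | h' | h'
            · exact ha2.ne (hDiso_u a2 (by rw [h'] at hx; exact hx))
            · exact hxy2 (by rw [h', ← h]; exact Sym2.eq_swap)
            · exact hAB a2 b2 ha2 hb2 ha2v hb2u x hx (by rw [h'])
        · have hDadj : (Gr.deleteEdges {e : Sym2 V | u ∈ e ∨ v ∈ e}).Adj x y := by
            rw [deleteEdges_adj]
            exact ⟨(by
              rcases (hG2adj x y).mp hxy1 with ⟨h, _, _⟩ | h | h
              · exact h
              · exact absurd (h ▸ (by simp : u ∈ s(u,b1))) hus
              · exact absurd (h ▸ (by simp : v ∈ s(v,a2))) hvs), fun hm => hm.elim hus hvs⟩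
          exact hDadj.symm.reachable.trans hx
    have hvW := mem_of_reach_closed hW (Reachable.refl a2 :
        a2 ∈ {z : V | (Gr.deleteEdges {e : Sym2 V | u ∈ e ∨ v ∈ e}).Reachable z a2}) hC.symm
    simp only [Set.mem_setOf_eq] at hvW
    exact ha2v (hDiso_v a2 hvW).symm
  -- reachability after deleting an untouched edge is unchanged
  have hsameReach : ∀ eX : Sym2 V, eX ∈ Gr.edgeSet → eX ≠ s(u,v) → eX ≠ s(u,a2) →
      eX ≠ s(v,b1) → ∀ x y : V,
      ((G2.deleteEdges {eX}).Reachable x y ↔ (Gr.deleteEdges {eX}).Reachable x y) := by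
    intro eX hEX he0X hd1X hd2X x y
    constructor
    · refine fun h => reach_trans_of_adj (fun p q hpq => ?_) h
      rw [deleteEdges_adj, Set.mem_singleton_iff] at hpq
      obtain ⟨hpq1, hpq2⟩ := hpq
      have huvR : (Gr.deleteEdges {eX}).Adj u v := by
        rw [deleteEdges_adj, Set.mem_singleton_iff]
        exact ⟨huv, fun h => he0X h.symm⟩
      have hvb1R : (Gr.deleteEdges {eX}).Adj v b1 := by
        rw [deleteEdges_adj, Set.mem_singleton_iff]
        exact ⟨hb1, fun h => hd2X h.symm⟩
      have hua2R : (Gr.deleteEdges {eX}).Adj u a2 := by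
        rw [deleteEdges_adj, Set.mem_singleton_iff]
        exact ⟨ha2, fun h => hd1X h.symm⟩
      rcases (hG2adj p q).mp hpq1 with ⟨h, _, _⟩ | h | h
      · exact Adj.reachable (by rw [deleteEdges_adj, Set.mem_singleton_iff]; exact ⟨h, hpq2⟩)
      · rcases Sym2.eq_iff.mp h with ⟨rfl, rfl⟩ | ⟨rfl, rfl⟩
        · exact huvR.reachable.trans hvb1R.reachable
        · exact (huvR.reachable.trans hvb1R.reachable).symm
      · rcases Sym2.eq_iff.mp h with ⟨rfl, rfl⟩ | ⟨rfl, rfl⟩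
        · exact huvR.symm.reachable.trans hua2R.reachable
        · exact (huvR.symm.reachable.trans hua2R.reachable).symm
    · refine fun h => reach_trans_of_adj (fun p q hpq => ?_) h
      rw [deleteEdges_adj, Set.mem_singleton_iff] at hpq
      obtain ⟨hpq1, hpq2⟩ := hpq
      have huv2 : (G2.deleteEdges {eX}).Adj u v := by
        rw [deleteEdges_adj, Set.mem_singleton_iff]
        exact ⟨hA_uv, fun h => he0X h.symm⟩
      have hub12 : (G2.deleteEdges {eX}).Adj u b1 := by
        rw [deleteEdges_adj, Set.mem_singleton_iff]
        exact ⟨hA_ub1, fun h => hn1E (by rw [h]; exact hEX)⟩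
      have hva22 : (G2.deleteEdges {eX}).Adj v a2 := by
        rw [deleteEdges_adj, Set.mem_singleton_iff]
        exact ⟨hA_va2, fun h => hn2E (by rw [h]; exact hEX)⟩
      by_cases h1 : s(p,q) = s(u,a2)
      · rcases Sym2.eq_iff.mp h1 with ⟨rfl, rfl⟩ | ⟨rfl, rfl⟩
        · exact huv2.reachable.trans hva22.reachable
        · exact (huv2.reachable.trans hva22.reachable).symm
      · by_cases h2 : s(p,q) = s(v,b1)
        · rcases Sym2.eq_iff.mp h2 with ⟨rfl, rfl⟩ | ⟨rfl, rfl⟩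
          · exact huv2.symm.reachable.trans hub12.reachable
          · exact (huv2.symm.reachable.trans hub12.reachable).symm
        · exact Adj.reachable (by
            rw [deleteEdges_adj, Set.mem_singleton_iff]
            exact ⟨(hG2adj p q).mpr (Or.inl ⟨hpq1, h1, h2⟩), hpq2⟩)
  -- G2 is a tree
  have hT2 : G2.IsTree := by
    refine ⟨?_, ?_⟩
    · rw [connected_iff]
      refine ⟨fun x y => ?_, ⟨u⟩⟩
      refine reach_trans_of_adj (fun p q hpq => ?_) (hT.isConnected.preconnected x y)
      by_cases h1 : s(p,q) = s(u,a2)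
      · rcases Sym2.eq_iff.mp h1 with ⟨rfl, rfl⟩ | ⟨rfl, rfl⟩
        · exact hA_uv.reachable.trans hA_va2.reachable
        · exact (hA_uv.reachable.trans hA_va2.reachable).symm
      · by_cases h2 : s(p,q) = s(v,b1)
        · rcases Sym2.eq_iff.mp h2 with ⟨rfl, rfl⟩ | ⟨rfl, rfl⟩
          · exact hA_uv.symm.reachable.trans hA_ub1.reachable
          · exact (hA_uv.symm.reachable.trans hA_ub1.reachable).symm
        · exact ((hG2adj p q).mpr (Or.inl ⟨hpq, h1, h2⟩)).reachable
    · rw [isAcyclic_iff_forall_edge_isBridge]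
      intro e he
      rw [hE2] at he
      rcases he with ⟨heG, hnd⟩ | hnew
      · simp only [Set.mem_insert_iff, Set.mem_singleton_iff, not_or] at hnd
        by_cases he0 : e = s(u,v)
        · rw [he0, isBridge_iff]
          exact hBridge_e0
        · revert heG hnd he0
          refine Sym2.ind (fun p q => ?_) e
          intro heG hnd he0
          rw [isBridge_iff]
          have hadjG : Gr.Adj p q := heG
          refine fun hre => ?_
          exact tree_bridge hT hadjG
            ((hsameReach s(p,q) heG he0 hnd.1 hnd.2 p q).mp hre)
      · simp only [Set.mem_insert_iff, Set.mem_singleton_iff] at hnew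
        rcases hnew with rfl | rfl
        · rw [isBridge_iff]
          exact hBridge_n1
        · rw [isBridge_iff]
          exact hBridge_n2
  -- the new phylogenetic tree and the NNI move
  have hleaf2 : ∀ w : V, (G2.neighborSet w).ncard = 1 ↔ ∃ i, T.leaf i = w := by
    intro w
    rw [hdeg2 w]
    exact T.leaf_iff w
  let T2 : PhyloTree n V := ⟨G2, hT2, T.leaf, T.leaf_inj, hleaf2⟩
  have hMove : NNIMove T T2 := ⟨u, v, a2, b1, huv, hu, hv, ha2, hb1, ha2v, hb1u, rfl, hE2⟩
  have hPhiLe : Phi T f ≤ Phi T2 f := hmin T2 hMove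
  -- leaves are not inner vertices
  have hno_u : ∀ i : Fin n, T.leaf i ≠ u := fun i h => hu ((T.leaf_iff u).mpr ⟨i, h⟩)
  have hno_v : ∀ i : Fin n, T.leaf i ≠ v := fun i h => hv ((T.leaf_iff v).mpr ⟨i, h⟩)
  -- identification of the four branch leaf sets
  have hx1 : splitSide Gr T.leaf a1 u = {i : Fin n | (Gr.deleteEdges {e : Sym2 V | u ∈ e ∨ v ∈ e}).Reachable (T.leaf i) a1}.ncard := by
    unfold splitSide
    congr 1
    ext i
    rw [Set.mem_setOf_eq, Set.mem_setOf_eq, show s(a1,u) = s(u,a1) from Sym2.eq_swap,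
      reach_nbr_iff_D hT huv.symm ha1 ha1v (T.leaf i), hDsetcomm]
  have hx2 : splitSide Gr T.leaf a2 u = {i : Fin n | (Gr.deleteEdges {e : Sym2 V | u ∈ e ∨ v ∈ e}).Reachable (T.leaf i) a2}.ncard := by
    unfold splitSide
    congr 1
    ext i
    rw [Set.mem_setOf_eq, Set.mem_setOf_eq, show s(a2,u) = s(u,a2) from Sym2.eq_swap,
      reach_nbr_iff_D hT huv.symm ha2 ha2v (T.leaf i), hDsetcomm]
  have hx3 : splitSide Gr T.leaf b1 v = {i : Fin n | (Gr.deleteEdges {e : Sym2 V | u ∈ e ∨ v ∈ e}).Reachable (T.leaf i) b1}.ncard := by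
    unfold splitSide
    congr 1
    ext i
    rw [Set.mem_setOf_eq, Set.mem_setOf_eq, show s(b1,v) = s(v,b1) from Sym2.eq_swap,
      reach_nbr_iff_D hT huv hb1 hb1u (T.leaf i)]
  have hx4 : splitSide Gr T.leaf b2 v = {i : Fin n | (Gr.deleteEdges {e : Sym2 V | u ∈ e ∨ v ∈ e}).Reachable (T.leaf i) b2}.ncard := by
    unfold splitSide
    congr 1
    ext i
    rw [Set.mem_setOf_eq, Set.mem_setOf_eq, show s(b2,v) = s(v,b2) from Sym2.eq_swap,
      reach_nbr_iff_D hT huv hb2 hb2u (T.leaf i)]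
  have hx2' : splitSide G2 T.leaf a2 v = {i : Fin n | (Gr.deleteEdges {e : Sym2 V | u ∈ e ∨ v ∈ e}).Reachable (T.leaf i) a2}.ncard := by
    unfold splitSide
    congr 1
    ext i
    rw [Set.mem_setOf_eq, Set.mem_setOf_eq, show s(a2,v) = s(v,a2) from Sym2.eq_swap,
      reach_nbr_iff_D hT2 hA_uv hA_va2 ha2.ne' (T.leaf i), hD2D]
  have hx3' : splitSide G2 T.leaf b1 u = {i : Fin n | (Gr.deleteEdges {e : Sym2 V | u ∈ e ∨ v ∈ e}).Reachable (T.leaf i) b1}.ncard := by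
    unfold splitSide
    congr 1
    ext i
    rw [Set.mem_setOf_eq, Set.mem_setOf_eq, show s(b1,u) = s(u,b1) from Sym2.eq_swap,
      reach_nbr_iff_D hT2 hA_uv.symm hA_ub1 hb1.ne' (T.leaf i), hDsetcomm, hD2D]
  -- disjointness of leaf sets
  have hdisj12 : Disjoint {i : Fin n | (Gr.deleteEdges {e : Sym2 V | u ∈ e ∨ v ∈ e}).Reachable (T.leaf i) a1} {i : Fin n | (Gr.deleteEdges {e : Sym2 V | u ∈ e ∨ v ∈ e}).Reachable (T.leaf i) a2} :=
    Set.disjoint_left.mpr fun i h1 h2 => hsameU a1 a2 ha1 ha2 ha (T.leaf i) h1 h2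
  have hdisj34 : Disjoint {i : Fin n | (Gr.deleteEdges {e : Sym2 V | u ∈ e ∨ v ∈ e}).Reachable (T.leaf i) b1} {i : Fin n | (Gr.deleteEdges {e : Sym2 V | u ∈ e ∨ v ∈ e}).Reachable (T.leaf i) b2} :=
    Set.disjoint_left.mpr fun i h1 h2 => hsameV b1 b2 hb1 hb2 hb (T.leaf i) h1 h2
  have hdisj13 : Disjoint {i : Fin n | (Gr.deleteEdges {e : Sym2 V | u ∈ e ∨ v ∈ e}).Reachable (T.leaf i) a1} {i : Fin n | (Gr.deleteEdges {e : Sym2 V | u ∈ e ∨ v ∈ e}).Reachable (T.leaf i) b1} :=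
    Set.disjoint_left.mpr fun i h1 h2 => hAB a1 b1 ha1 hb1 ha1v hb1u (T.leaf i) h1 h2
  have hdisj24 : Disjoint {i : Fin n | (Gr.deleteEdges {e : Sym2 V | u ∈ e ∨ v ∈ e}).Reachable (T.leaf i) a2} {i : Fin n | (Gr.deleteEdges {e : Sym2 V | u ∈ e ∨ v ∈ e}).Reachable (T.leaf i) b2} :=
    Set.disjoint_left.mpr fun i h1 h2 => hAB a2 b2 ha2 hb2 ha2v hb2u (T.leaf i) h1 h2
  -- the two sides of the middle edge
  have hmidT_u : splitSide Gr T.leaf u v = {i : Fin n | (Gr.deleteEdges {e : Sym2 V | u ∈ e ∨ v ∈ e}).Reachable (T.leaf i) a1}.ncard + {i : Fin n | (Gr.deleteEdges {e : Sym2 V | u ∈ e ∨ v ∈ e}).Reachable (T.leaf i) a2}.ncard := by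
    unfold splitSide
    have hset : {i : Fin n | (Gr.deleteEdges {s(u,v)}).Reachable (T.leaf i) u} =
        {i : Fin n | (Gr.deleteEdges {e : Sym2 V | u ∈ e ∨ v ∈ e}).Reachable (T.leaf i) a1} ∪ {i : Fin n | (Gr.deleteEdges {e : Sym2 V | u ∈ e ∨ v ∈ e}).Reachable (T.leaf i) a2} := by
      ext i
      rw [Set.mem_setOf_eq, side_eq_tri hT huv hNu ha1v ha2v (T.leaf i)]
      simp only [Set.mem_union, Set.mem_setOf_eq]
      constructor
      · rintro (h | h | h)
        · exact absurd h (hno_u i)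
        · exact Or.inl h
        · exact Or.inr h
      · rintro (h | h)
        · exact Or.inr (Or.inl h)
        · exact Or.inr (Or.inr h)
    rw [hset, Set.ncard_union_eq hdisj12 (Set.toFinite _) (Set.toFinite _)]
  have hmidT_v : splitSide Gr T.leaf v u = {i : Fin n | (Gr.deleteEdges {e : Sym2 V | u ∈ e ∨ v ∈ e}).Reachable (T.leaf i) b1}.ncard + {i : Fin n | (Gr.deleteEdges {e : Sym2 V | u ∈ e ∨ v ∈ e}).Reachable (T.leaf i) b2}.ncard := by
    unfold splitSide
    have hset : {i : Fin n | (Gr.deleteEdges {s(v,u)}).Reachable (T.leaf i) v} =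
        {i : Fin n | (Gr.deleteEdges {e : Sym2 V | u ∈ e ∨ v ∈ e}).Reachable (T.leaf i) b1} ∪ {i : Fin n | (Gr.deleteEdges {e : Sym2 V | u ∈ e ∨ v ∈ e}).Reachable (T.leaf i) b2} := by
      ext i
      rw [Set.mem_setOf_eq, side_eq_tri hT huv.symm hNv hb1u hb2u (T.leaf i), hDsetcomm]
      simp only [Set.mem_union, Set.mem_setOf_eq]
      constructor
      · rintro (h | h | h)
        · exact absurd h (hno_v i)
        · exact Or.inl h
        · exact Or.inr h
      · rintro (h | h)
        · exact Or.inr (Or.inl h)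
        · exact Or.inr (Or.inr h)
    rw [hset, Set.ncard_union_eq hdisj34 (Set.toFinite _) (Set.toFinite _)]
  have hmid2_u : splitSide G2 T.leaf u v = {i : Fin n | (Gr.deleteEdges {e : Sym2 V | u ∈ e ∨ v ∈ e}).Reachable (T.leaf i) a1}.ncard + {i : Fin n | (Gr.deleteEdges {e : Sym2 V | u ∈ e ∨ v ∈ e}).Reachable (T.leaf i) b1}.ncard := by
    unfold splitSide
    have hset : {i : Fin n | (G2.deleteEdges {s(u,v)}).Reachable (T.leaf i) u} =
        {i : Fin n | (Gr.deleteEdges {e : Sym2 V | u ∈ e ∨ v ∈ e}).Reachable (T.leaf i) a1} ∪ {i : Fin n | (Gr.deleteEdges {e : Sym2 V | u ∈ e ∨ v ∈ e}).Reachable (T.leaf i) b1} := by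
      ext i
      rw [Set.mem_setOf_eq, side_eq_tri hT2 hA_uv hNu2 ha1v hb1.ne' (T.leaf i), hD2D]
      simp only [Set.mem_union, Set.mem_setOf_eq]
      constructor
      · rintro (h | h | h)
        · exact absurd h (hno_u i)
        · exact Or.inl h
        · exact Or.inr h
      · rintro (h | h)
        · exact Or.inr (Or.inl h)
        · exact Or.inr (Or.inr h)
    rw [hset, Set.ncard_union_eq hdisj13 (Set.toFinite _) (Set.toFinite _)]
  have hmid2_v : splitSide G2 T.leaf v u = {i : Fin n | (Gr.deleteEdges {e : Sym2 V | u ∈ e ∨ v ∈ e}).Reachable (T.leaf i) a2}.ncard + {i : Fin n | (Gr.deleteEdges {e : Sym2 V | u ∈ e ∨ v ∈ e}).Reachable (T.leaf i) b2}.ncard := by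
    unfold splitSide
    have hset : {i : Fin n | (G2.deleteEdges {s(v,u)}).Reachable (T.leaf i) v} =
        {i : Fin n | (Gr.deleteEdges {e : Sym2 V | u ∈ e ∨ v ∈ e}).Reachable (T.leaf i) a2} ∪ {i : Fin n | (Gr.deleteEdges {e : Sym2 V | u ∈ e ∨ v ∈ e}).Reachable (T.leaf i) b2} := by
      ext i
      rw [Set.mem_setOf_eq, side_eq_tri hT2 hA_uv.symm hNv2 ha2.ne' hb2u (T.leaf i),
        hDsetcomm, hD2D]
      simp only [Set.mem_union, Set.mem_setOf_eq]
      constructor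
      · rintro (h | h | h)
        · exact absurd h (hno_v i)
        · exact Or.inl h
        · exact Or.inr h
      · rintro (h | h)
        · exact Or.inr (Or.inl h)
        · exact Or.inr (Or.inr h)
    rw [hset, Set.ncard_union_eq hdisj24 (Set.toFinite _) (Set.toFinite _)]
  -- totals
  have htotA2 : splitSide Gr T.leaf u a2 + splitSide Gr T.leaf a2 u = n :=
    side_card_add Gr hT T.leaf ha2
  have htotA2' : splitSide G2 T.leaf v a2 + splitSide G2 T.leaf a2 v = n :=
    side_card_add G2 hT2 T.leaf hA_va2
  have htotB1 : splitSide Gr T.leaf v b1 + splitSide Gr T.leaf b1 v = n :=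
    side_card_add Gr hT T.leaf hb1
  have htotB1' : splitSide G2 T.leaf u b1 + splitSide G2 T.leaf b1 u = n :=
    side_card_add G2 hT2 T.leaf hA_ub1
  have htotUV : splitSide Gr T.leaf u v + splitSide Gr T.leaf v u = n :=
    side_card_add Gr hT T.leaf huv
  -- positivity of the branch sizes
  have hp1 : 1 ≤ splitSide Gr T.leaf a1 u :=
    subtree_leaf Gr hT T.leaf (fun w hw => (T.leaf_iff w).mp hw) hbin' ha1
  have hp2 : 1 ≤ splitSide Gr T.leaf a2 u :=
    subtree_leaf Gr hT T.leaf (fun w hw => (T.leaf_iff w).mp hw) hbin' ha2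
  have hp3 : 1 ≤ splitSide Gr T.leaf b1 v :=
    subtree_leaf Gr hT T.leaf (fun w hw => (T.leaf_iff w).mp hw) hbin' hb1
  have hp4 : 1 ≤ splitSide Gr T.leaf b2 v :=
    subtree_leaf Gr hT T.leaf (fun w hw => (T.leaf_iff w).mp hw) hbin' hb2
  -- split sizes of edges
  have hsz0T : splitSizeE T s(u,v) =
      min (splitSide Gr T.leaf u v) (splitSide Gr T.leaf v u) := rfl
  have hsz0T2 : splitSizeE T2 s(u,v) =
      min (splitSide G2 T.leaf u v) (splitSide G2 T.leaf v u) := rfl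
  have hszd1eq : splitSizeE T2 s(v,a2) = splitSizeE T s(u,a2) := by
    have h1 : splitSizeE T2 s(v,a2) =
        min (splitSide G2 T.leaf v a2) (splitSide G2 T.leaf a2 v) := rfl
    have h2 : splitSizeE T s(u,a2) =
        min (splitSide Gr T.leaf u a2) (splitSide Gr T.leaf a2 u) := rfl
    rw [h1, h2]
    omega
  have hszd2eq : splitSizeE T2 s(u,b1) = splitSizeE T s(v,b1) := by
    have h1 : splitSizeE T2 s(u,b1) =
        min (splitSide G2 T.leaf u b1) (splitSide G2 T.leaf b1 u) := rfl
    have h2 : splitSizeE T s(v,b1) =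
        min (splitSide Gr T.leaf v b1) (splitSide Gr T.leaf b1 v) := rfl
    rw [h1, h2]
    omega
  have hsz_otherE : ∀ e : Sym2 V, e ∈ Gr.edgeSet → e ≠ s(u,v) → e ≠ s(u,a2) →
      e ≠ s(v,b1) → splitSizeE T2 e = splitSizeE T e := by
    intro e
    refine Sym2.ind (fun p q => ?_) e
    intro heG he0X hd1X hd2X
    have h1 : splitSizeE T2 s(p,q) =
        min (splitSide G2 T.leaf p q) (splitSide G2 T.leaf q p) := rfl
    have h2 : splitSizeE T s(p,q) =
        min (splitSide Gr T.leaf p q) (splitSide Gr T.leaf q p) := rfl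
    rw [h1, h2]
    have hs1 : splitSide G2 T.leaf p q = splitSide Gr T.leaf p q := by
      unfold splitSide
      congr 1
      ext i
      rw [Set.mem_setOf_eq, Set.mem_setOf_eq,
        hsameReach s(p,q) heG he0X hd1X hd2X (T.leaf i) p]
    have hs2 : splitSide G2 T.leaf q p = splitSide Gr T.leaf q p := by
      unfold splitSide
      congr 1
      ext i
      rw [Set.mem_setOf_eq, Set.mem_setOf_eq, show s(q,p) = s(p,q) from Sym2.eq_swap,
        hsameReach s(p,q) heG he0X hd1X hd2X (T.leaf i) q]
    rw [hs1, hs2]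
  -- the edge relabeling
  set rho : Sym2 V → Sym2 V := fun e =>
    if e = s(u,a2) then s(v,a2) else if e = s(v,a2) then s(u,a2) else
    if e = s(v,b1) then s(u,b1) else if e = s(u,b1) then s(v,b1) else e with hrhodef
  have hrd1 : rho s(u,a2) = s(v,a2) := by simp [hrhodef]
  have hrn2 : rho s(v,a2) = s(u,a2) := by
    simp [hrhodef, Ne.symm hd1n2]
  have hrd2 : rho s(v,b1) = s(u,b1) := by
    simp [hrhodef, Ne.symm hd1d2, hd2n2]
  have hrn1 : rho s(u,b1) = s(v,b1) := by
    simp [hrhodef, Ne.symm hd1n1, hn1n2, Ne.symm hd2n1]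
  have hre0 : rho s(u,v) = s(u,v) := by
    simp [hrhodef, he0d1, he0n2, he0d2, he0n1]
  have hrold : ∀ e : Sym2 V, e ≠ s(u,a2) → e ≠ s(v,a2) → e ≠ s(v,b1) → e ≠ s(u,b1) →
      rho e = e := by
    intro e h1 h2 h3 h4
    simp [hrhodef, h1, h2, h3, h4]
  have hrinv : ∀ e, rho (rho e) = e := by
    intro e
    by_cases h1 : e = s(u,a2)
    · rw [h1, hrd1, hrn2]
    · by_cases h2 : e = s(v,a2)
      · rw [h2, hrn2, hrd1]
      · by_cases h3 : e = s(v,b1)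
        · rw [h3, hrd2, hrn1]
        · by_cases h4 : e = s(u,b1)
          · rw [h4, hrn1, hrd2]
          · rw [hrold e h1 h2 h3 h4, hrold e h1 h2 h3 h4]
  have hrinj : Function.Injective rho := Function.Involutive.injective hrinv
  -- bounds for the middle split sizes
  have hL1pos : 1 ≤ (splitSide Gr T.leaf a1 u) := hp1
  have hsz0T_ge : 2 ≤ splitSizeE T s(u,v) := by
    rw [hsz0T, hmidT_u, hmidT_v]
    rw [hx1] at hp1
    rw [hx2] at hp2
    rw [hx3] at hp3
    rw [hx4] at hp4
    omega
  have hsz0T2_ge : 2 ≤ splitSizeE T2 s(u,v) := by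
    rw [hsz0T2, hmid2_u, hmid2_v]
    rw [hx1] at hp1
    rw [hx2] at hp2
    rw [hx3] at hp3
    rw [hx4] at hp4
    omega
  -- membership characterization of the edge sets
  have himg : rho '' {e : Sym2 V | e ∈ Gr.edgeSet ∧ 2 ≤ splitSizeE T e} =
      {e : Sym2 V | e ∈ G2.edgeSet ∧ 2 ≤ splitSizeE T2 e} := by
    apply Set.Subset.antisymm
    · rintro e2 ⟨e, ⟨heE, hsz⟩, rfl⟩
      by_cases h1 : e = s(u,a2)
      · subst h1
        rw [hrd1]
        refine ⟨?_, ?_⟩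
        · rw [hE2]
          exact Or.inr (Or.inr rfl)
        · rw [hszd1eq]
          exact hsz
      · by_cases h3 : e = s(v,b1)
        · subst h3
          rw [hrd2]
          refine ⟨?_, ?_⟩
          · rw [hE2]
            exact Or.inr (Or.inl rfl)
          · rw [hszd2eq]
            exact hsz
        · have h2 : e ≠ s(v,a2) := fun h => hn2E (h ▸ heE)
          have h4 : e ≠ s(u,b1) := fun h => hn1E (h ▸ heE)
          rw [hrold e h1 h2 h3 h4]
          refine ⟨?_, ?_⟩
          · rw [hE2]
            exact Or.inl ⟨heE, by simp [h1, h3]⟩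
          · by_cases he0 : e = s(u,v)
            · subst he0
              exact hsz0T2_ge
            · rw [hsz_otherE e heE he0 h1 h3]
              exact hsz
    · rintro e ⟨heE, hsz⟩
      rw [hE2] at heE
      rcases heE with ⟨heG, hnd⟩ | hnew
      · simp only [Set.mem_insert_iff, Set.mem_singleton_iff, not_or] at hnd
        have h2 : e ≠ s(v,a2) := fun h => hn2E (h ▸ heG)
        have h4 : e ≠ s(u,b1) := fun h => hn1E (h ▸ heG)
        refine ⟨e, ⟨heG, ?_⟩, hrold e hnd.1 h2 hnd.2 h4⟩
        by_cases he0 : e = s(u,v)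
        · subst he0
          exact hsz0T_ge
        · rw [← hsz_otherE e heG he0 hnd.1 hnd.2]
          exact hsz
      · simp only [Set.mem_insert_iff, Set.mem_singleton_iff] at hnew
        rcases hnew with rfl | rfl
        · refine ⟨s(v,b1), ⟨hb1, ?_⟩, hrd2⟩
          rw [← hszd2eq]
          exact hsz
        · refine ⟨s(u,a2), ⟨ha2, ?_⟩, hrd1⟩
          rw [← hszd1eq]
          exact hsz
  -- rewriting Phi as a finite sum split at the middle edge
  have hSfin : ({e : Sym2 V | e ∈ Gr.edgeSet ∧ 2 ≤ splitSizeE T e}).Finite :=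
    Set.toFinite _
  have he0mem : s(u,v) ∈ hSfin.toFinset := by
    rw [Set.Finite.mem_toFinset]
    exact ⟨huv, hsz0T_ge⟩
  have hPhiT : Phi T f = f (splitSizeE T s(u,v)) +
      ∑ e ∈ hSfin.toFinset.erase s(u,v), f (splitSizeE T e) := by
    have h0 : Phi T f = ∑ᶠ e ∈ {e : Sym2 V | e ∈ Gr.edgeSet ∧ 2 ≤ splitSizeE T e},
        f (splitSizeE T e) := rfl
    rw [h0, finsum_mem_eq_finite_toFinset_sum _ hSfin]
    exact (Finset.add_sum_erase _ _ he0mem).symm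
  have hPhiT2 : Phi T2 f = f (splitSizeE T2 s(u,v)) +
      ∑ e ∈ hSfin.toFinset.erase s(u,v), f (splitSizeE T e) := by
    have h0 : Phi T2 f = ∑ᶠ e ∈ {e : Sym2 V | e ∈ G2.edgeSet ∧ 2 ≤ splitSizeE T2 e},
        f (splitSizeE T2 e) := rfl
    rw [h0, ← himg,
      finsum_mem_image (f := fun e => f (splitSizeE T2 e)) (Set.injOn_of_injective hrinj),
      finsum_mem_eq_finite_toFinset_sum _ hSfin,
      ← Finset.add_sum_erase _ _ he0mem, hre0]
    congr 1
    refine Finset.sum_congr rfl (fun e he => ?_)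
    rw [Finset.mem_erase, Set.Finite.mem_toFinset] at he
    obtain ⟨hne0, heE, _⟩ := he
    by_cases h1 : e = s(u,a2)
    · rw [h1, hrd1, hszd1eq, ← h1]
    · by_cases h3 : e = s(v,b1)
      · rw [h3, hrd2, hszd2eq, ← h3]
      · have h2 : e ≠ s(v,a2) := fun h => hn2E (h ▸ heE)
        have h4 : e ≠ s(u,b1) := fun h => hn1E (h ▸ heE)
        rw [hrold e h1 h2 h3 h4, hsz_otherE e heE hne0 h1 h3]
  -- conclude
  have hfle : f (splitSizeE T s(u,v)) ≤ f (splitSizeE T2 s(u,v)) := by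
    rw [hPhiT, hPhiT2] at hPhiLe
    linarith
  have hlt : splitSizeE T2 s(u,v) < splitSizeE T s(u,v) := by
    rw [hsz0T, hsz0T2, hmidT_u, hmidT_v, hmid2_u, hmid2_v]
    rw [hx1, hx2, hx3, hx4] at hcon
    omega
  have hhalf : splitSizeE T s(u,v) ≤ n / 2 := by
    rw [hsz0T]
    omega
  have := hf (splitSizeE T2 s(u,v)) (splitSizeE T s(u,v)) hsz0T2_ge hlt hhalf
  linarith


/-- If `τ` is an NNI-local minimum of `Φ_f` (for strictly increasing `f`), then
for every inner edge `{u,v}` with attached subtrees of sizes `x₁, x₂ | x₃, x₄`: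
`min(x₁+x₂, x₃+x₄) ≤ min(x₁+x₃, x₂+x₄)` and `min(x₁+x₂, x₃+x₄) ≤ min(x₁+x₄, x₂+x₃)`. -/
theorem stmt_12 {n : ℕ} {V : Type} [Fintype V]
    (T : PhyloTree n V) (hbin : IsBinary T)
    (f : ℕ → ℝ) (hf0 : ∀ k, 2 ≤ k → k ≤ n / 2 → 0 ≤ f k)
    (hf : ∀ a b, 2 ≤ a → a < b → b ≤ n / 2 → f a < f b)
    (hmin : ∀ T' : PhyloTree n V, NNIMove T T' → Phi T f ≤ Phi T' f)
    (u v a1 a2 b1 b2 : V)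
    (huv : T.G.Adj u v) (hu : ¬ IsLeaf T u) (hv : ¬ IsLeaf T v)
    (ha1 : T.G.Adj u a1) (ha2 : T.G.Adj u a2) (ha : a1 ≠ a2)
    (ha1v : a1 ≠ v) (ha2v : a2 ≠ v)
    (hb1 : T.G.Adj v b1) (hb2 : T.G.Adj v b2) (hb : b1 ≠ b2)
    (hb1u : b1 ≠ u) (hb2u : b2 ≠ u) :
    min (splitSide T.G T.leaf a1 u + splitSide T.G T.leaf a2 u)
        (splitSide T.G T.leaf b1 v + splitSide T.G T.leaf b2 v) ≤
      min (splitSide T.G T.leaf a1 u + splitSide T.G T.leaf b1 v)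
        (splitSide T.G T.leaf a2 u + splitSide T.G T.leaf b2 v) ∧
    min (splitSide T.G T.leaf a1 u + splitSide T.G T.leaf a2 u)
        (splitSide T.G T.leaf b1 v + splitSide T.G T.leaf b2 v) ≤
      min (splitSide T.G T.leaf a1 u + splitSide T.G T.leaf b2 v)
        (splitSide T.G T.leaf a2 u + splitSide T.G T.leaf b1 v) := by
  constructor
  · exact key_ineq T hbin f hf hmin u v a1 a2 b1 b2 huv hu hv ha1 ha2 ha ha1v ha2v
      hb1 hb2 hb hb1u hb2u
  · have h2 := key_ineq T hbin f hf hmin u v a1 a2 b2 b1 huv hu hv ha1 ha2 ha ha1v ha2v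
      hb2 hb1 hb.symm hb2u hb1u
    omega
end
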